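/- arXiv:1406.4398 — 4 statements merged into one kernel-verified Lean document; each statement's English description precedes it below -/
import Mathlib

section
/- Define α_{3n} = q^{(3n-2)n}(1-q^{6n+1})/(1-q), α_{3n+1} = 0, α_{3n+2} = -q^{(3n+2)n}(1-q^{6n+5})/(1-q), and β_n = q^{n(n-1)}/(q;q)_{2n}. Then for every n≥0, β_n = Σ_{r=0}^n α_r / ((q;q)_{n-r} (q^2;q)_{n+r}). -/
open scoped BigOperators

/-- Finite q-Pochhammer symbol `(x;q)_n = ∏_{k=0}^{n-1} (1 - x qᵏ)`. -/
noncomputable def poch (x q : ℂ) (n : ℕ) : ℂ := ∏ k ∈ Finset.range n, (1 - x * q ^ k)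

/-- Infinite q-Pochhammer symbol `(x;q)_∞ = ∏_{k≥0} (1 - x qᵏ)`. -/
noncomputable def pochInf (x q : ℂ) : ℂ := ∏' k : ℕ, (1 - x * q ^ k)

section Aux
variable (q : ℂ)

lemma poch_q_succ (m : ℕ) : poch q q (m+1) = poch q q m * (1 - q ^ (m+1)) := by
  rw [poch, Finset.prod_range_succ, ← poch]; ring

lemma one_sub_pow_ne (hq : ‖q‖ < 1) {k : ℕ} (hk : k ≠ 0) : (1 : ℂ) - q ^ k ≠ 0 := by
  intro h
  have h1 : q ^ k = 1 := by linear_combination -h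
  have h2 : ‖q ^ k‖ < 1 := by
    rw [norm_pow]; exact pow_lt_one₀ (norm_nonneg q) hq hk
  rw [h1] at h2; simp at h2

lemma pochq_ne (hq : ‖q‖ < 1) (m : ℕ) : poch q q m ≠ 0 := by
  rw [poch]
  apply Finset.prod_ne_zero_iff.2
  intro k _
  have : (1 : ℂ) - q ^ (k+1) ≠ 0 := one_sub_pow_ne q hq (Nat.succ_ne_zero k)
  intro h; apply this; rw [← h]; ring

lemma one_sub_q_ne (hq : ‖q‖ < 1) : (1 : ℂ) - q ≠ 0 := by
  have := one_sub_pow_ne q hq (k := 1) one_ne_zero; simpa using this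

lemma poch_q2 (m : ℕ) : (1 - q) * poch (q^2) q m = poch q q (m+1) := by
  rw [poch, poch, Finset.prod_range_succ']
  rw [show (1 - q * q ^ 0) = 1 - q by ring, mul_comm]
  congr 1
  apply Finset.prod_congr rfl
  intro k _
  ring

/-- Gaussian binomial coefficient with ℤ lower index, zero outside range. -/
noncomputable def Cq (N : ℕ) (k : ℤ) : ℂ :=
  if 0 ≤ k ∧ k ≤ N then poch q q N / (poch q q k.toNat * poch q q (N - k.toNat)) else 0

lemma Cq_of_neg {k : ℤ} (hk : k < 0) (N : ℕ) : Cq q N k = 0 := by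
  rw [Cq, if_neg]; rintro ⟨h, -⟩; omega

lemma Cq_of_gt {N : ℕ} {k : ℤ} (hk : (N : ℤ) < k) : Cq q N k = 0 := by
  rw [Cq, if_neg]; rintro ⟨-, h⟩; omega

lemma Cq_natCast (N a : ℕ) (h : a ≤ N) :
    Cq q N (a : ℤ) = poch q q N / (poch q q a * poch q q (N - a)) := by
  rw [Cq, if_pos ⟨Int.natCast_nonneg a, by exact_mod_cast h⟩]
  simp

lemma Cq_bot (hq : ‖q‖ < 1) (N : ℕ) : Cq q N 0 = 1 := by
  have := Cq_natCast q N 0 (Nat.zero_le N)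
  simp only [Nat.cast_zero] at this
  rw [this, show poch q q 0 = 1 by simp [poch], Nat.sub_zero, one_mul,
    div_self (pochq_ne q hq N)]

lemma Cq_top (hq : ‖q‖ < 1) (N : ℕ) : Cq q N N = 1 := by
  rw [Cq_natCast q N N le_rfl, Nat.sub_self, show poch q q 0 = 1 by simp [poch],
    mul_one, div_self (pochq_ne q hq N)]

lemma Cq_symm (N : ℕ) (k : ℤ) : Cq q N k = Cq q N ((N : ℤ) - k) := by
  by_cases h : 0 ≤ k ∧ k ≤ N
  · obtain ⟨h1, h2⟩ := h
    rw [Cq, if_pos ⟨h1, h2⟩, Cq, if_pos ⟨by omega, by omega⟩]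
    have e1 : ((N : ℤ) - k).toNat = N - k.toNat := by omega
    rw [e1]
    have e2 : N - (N - k.toNat) = k.toNat := by omega
    rw [e2, mul_comm]
  · rw [Cq, if_neg h, Cq, if_neg (by omega)]

lemma pascal_core (hq : ‖q‖ < 1) (b c : ℕ) :
    poch q q (b+c+2) / (poch q q (b+1) * poch q q (c+1))
      = poch q q (b+c+1) / (poch q q b * poch q q (c+1))
        + q^(b+1) * (poch q q (b+c+1) / (poch q q (b+1) * poch q q c)) := by
  have e0 : poch q q (b+c+2) = poch q q (b+c+1) * (1 - q ^ (b+c+2)) := by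
    rw [show b+c+2 = (b+c+1)+1 by ring, poch_q_succ]
  rw [e0, poch_q_succ q b, poch_q_succ q c]
  have hb := pochq_ne q hq b
  have hc := pochq_ne q hq c
  have hbc := pochq_ne q hq (b+c+1)
  have hb1 := one_sub_pow_ne q hq (k := b+1) (by omega)
  have hc1 := one_sub_pow_ne q hq (k := c+1) (by omega)
  field_simp
  ring

lemma pascal_core2 (hq : ‖q‖ < 1) (b c : ℕ) :
    poch q q (b+c+2) / (poch q q (b+1) * poch q q (c+1))
      = q^(c+1) * (poch q q (b+c+1) / (poch q q b * poch q q (c+1)))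
        + poch q q (b+c+1) / (poch q q (b+1) * poch q q c) := by
  have e0 : poch q q (b+c+2) = poch q q (b+c+1) * (1 - q ^ (b+c+2)) := by
    rw [show b+c+2 = (b+c+1)+1 by ring, poch_q_succ]
  rw [e0, poch_q_succ q b, poch_q_succ q c]
  have hb := pochq_ne q hq b
  have hc := pochq_ne q hq c
  have hbc := pochq_ne q hq (b+c+1)
  have hb1 := one_sub_pow_ne q hq (k := b+1) (by omega)
  have hc1 := one_sub_pow_ne q hq (k := c+1) (by omega)
  field_simp
  ring

lemma pascal1 (hq : ‖q‖ < 1) (N : ℕ) (k : ℤ) :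
    Cq q (N+1) k = Cq q N (k-1) + q ^ k * Cq q N k := by
  by_cases hneg : k < 0
  · rw [Cq_of_neg q hneg, Cq_of_neg q (by omega), Cq_of_neg q hneg]; ring
  by_cases hbig : (N : ℤ) + 1 < k
  · rw [Cq_of_gt q (by push_cast; omega), Cq_of_gt q (k := k) (by omega),
      Cq_of_gt q (k := k - 1) (by omega)]; ring
  push_neg at hneg hbig
  obtain ⟨a, rfl⟩ := Int.eq_ofNat_of_zero_le hneg
  rcases Nat.eq_zero_or_pos a with rfl | hpos
  · simp only [Nat.cast_zero]
    rw [Cq_bot q hq, Cq_bot q hq, Cq_of_neg q (by norm_num)]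
    simp
  obtain ⟨b, rfl⟩ := Nat.exists_eq_add_of_le hpos
  have hble : 1 + b ≤ N + 1 := by exact_mod_cast hbig
  rcases Nat.lt_or_ge b N with hbN | hbN
  · -- 1 ≤ a = 1 + b ≤ N
    obtain ⟨c, hc⟩ := Nat.exists_eq_add_of_lt hbN
    have e1 : Cq q (N+1) ((1 + b : ℕ) : ℤ)
        = poch q q (N+1) / (poch q q (b+1) * poch q q (c+1)) := by
      rw [Cq_natCast q (N+1) (1+b) (by omega)]
      congr 2
      · congr 1; omega
      · congr 1; omega
    have e2 : Cq q N (((1 + b : ℕ) : ℤ) - 1) = poch q q N / (poch q q b * poch q q (c+1)) := by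
      rw [show (((1 + b : ℕ) : ℤ) - 1) = (b : ℤ) by push_cast; ring,
        Cq_natCast q N b (by omega)]
      congr 2; congr 1; omega
    have e3 : Cq q N ((1 + b : ℕ) : ℤ) = poch q q N / (poch q q (b+1) * poch q q c) := by
      rw [Cq_natCast q N (1+b) (by omega)]
      congr 2
      · congr 1; omega
      · congr 1; omega
    rw [e1, e2, e3, zpow_natCast, show ((1+b : ℕ)) = b + 1 by omega]
    have := pascal_core q hq b c
    rw [show b+c+2 = N+1 by omega, show b+c+1 = N by omega] at this
    exact this
  · -- a = N+1
    have haN : 1 + b = N + 1 := by omega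
    rw [haN]
    rw [Cq_top q hq (N+1), show ((N+1 : ℕ) : ℤ) - 1 = (N : ℤ) by push_cast; ring,
      Cq_top q hq N, Cq_of_gt q (k := ((N+1:ℕ) : ℤ)) (by push_cast; omega)]
    ring

lemma pascal2 (hq : ‖q‖ < 1) (N : ℕ) (k : ℤ) :
    Cq q (N+1) k = q ^ ((N : ℤ) + 1 - k) * Cq q N (k-1) + Cq q N k := by
  by_cases hneg : k < 0
  · rw [Cq_of_neg q hneg, Cq_of_neg q (by omega), Cq_of_neg q hneg]; ring
  by_cases hbig : (N : ℤ) + 1 < k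
  · rw [Cq_of_gt q (by push_cast; omega), Cq_of_gt q (k := k) (by omega),
      Cq_of_gt q (k := k - 1) (by omega)]; ring
  push_neg at hneg hbig
  obtain ⟨a, rfl⟩ := Int.eq_ofNat_of_zero_le hneg
  rcases Nat.eq_zero_or_pos a with rfl | hpos
  · simp only [Nat.cast_zero]
    rw [Cq_bot q hq, Cq_bot q hq, Cq_of_neg q (by norm_num)]
    ring
  obtain ⟨b, rfl⟩ := Nat.exists_eq_add_of_le hpos
  have hble : 1 + b ≤ N + 1 := by exact_mod_cast hbig
  rcases Nat.lt_or_ge b N with hbN | hbN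
  · obtain ⟨c, hc⟩ := Nat.exists_eq_add_of_lt hbN
    have e1 : Cq q (N+1) ((1 + b : ℕ) : ℤ)
        = poch q q (N+1) / (poch q q (b+1) * poch q q (c+1)) := by
      rw [Cq_natCast q (N+1) (1+b) (by omega)]
      congr 2
      · congr 1; omega
      · congr 1; omega
    have e2 : Cq q N (((1 + b : ℕ) : ℤ) - 1) = poch q q N / (poch q q b * poch q q (c+1)) := by
      rw [show (((1 + b : ℕ) : ℤ) - 1) = (b : ℤ) by push_cast; ring,
        Cq_natCast q N b (by omega)]
      congr 2; congr 1; omega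
    have e3 : Cq q N ((1 + b : ℕ) : ℤ) = poch q q N / (poch q q (b+1) * poch q q c) := by
      rw [Cq_natCast q N (1+b) (by omega)]
      congr 2
      · congr 1; omega
      · congr 1; omega
    rw [e1, e2, e3, show ((N : ℤ) + 1 - ((1+b : ℕ) : ℤ)) = ((c + 1 : ℕ) : ℤ) by push_cast; omega,
      zpow_natCast]
    have := pascal_core2 q hq b c
    rw [show b+c+2 = N+1 by omega, show b+c+1 = N by omega] at this
    exact this
  · have haN : 1 + b = N + 1 := by omega
    rw [haN]
    rw [Cq_top q hq (N+1), show ((N+1 : ℕ) : ℤ) - 1 = (N : ℤ) by push_cast; ring,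
      Cq_top q hq N, Cq_of_gt q (k := ((N+1:ℕ) : ℤ)) (by push_cast; omega),
      show (N : ℤ) + 1 - ((N+1 : ℕ) : ℤ) = 0 by push_cast; ring]
    simp

/-- shifted range sum -/
noncomputable def SI (f : ℤ → ℂ) (a : ℤ) (K : ℕ) : ℂ := ∑ i ∈ Finset.range K, f (a + i)

lemma SI_succ_left (f : ℤ → ℂ) (a : ℤ) (K : ℕ) : SI f a (K+1) = f a + SI f (a+1) K := by
  rw [SI, Finset.sum_range_succ', SI]
  simp only [Nat.cast_add, Nat.cast_one, Nat.cast_zero, add_zero]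
  rw [add_comm]
  congr 1
  apply Finset.sum_congr rfl
  intro i _
  congr 1
  ring

lemma SI_succ_right (f : ℤ → ℂ) (a : ℤ) (K : ℕ) : SI f a (K+1) = SI f a K + f (a+K) := by
  rw [SI, Finset.sum_range_succ, SI]

lemma SI_congr {f g : ℤ → ℂ} (h : ∀ j, f j = g j) (a : ℤ) (K : ℕ) : SI f a K = SI g a K := by
  unfold SI; exact Finset.sum_congr rfl (fun i _ => h _)

lemma SI_add (f g : ℤ → ℂ) (a : ℤ) (K : ℕ) :
    SI (fun j => f j + g j) a K = SI f a K + SI g a K := by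
  unfold SI; exact Finset.sum_add_distrib

lemma SI_smul (c : ℂ) (f : ℤ → ℂ) (a : ℤ) (K : ℕ) :
    SI (fun j => c * f j) a K = c * SI f a K := by
  unfold SI; rw [Finset.mul_sum]

lemma SI_shift (f : ℤ → ℂ) (c a : ℤ) (K : ℕ) :
    SI (fun j => f (j + c)) a K = SI f (a + c) K := by
  unfold SI
  apply Finset.sum_congr rfl
  intro i _
  congr 1
  ring

lemma SI_split (f : ℤ → ℂ) (a : ℤ) (K1 K2 : ℕ) :
    SI f a (K1 + K2) = SI f a K1 + SI f (a + K1) K2 := by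
  induction K2 with
  | zero => simp [SI]
  | succ m ih =>
    rw [show K1 + (m+1) = (K1+m)+1 by ring, SI_succ_right, ih, SI_succ_right]
    push_cast
    rw [add_assoc]
    congr 2
    ring

/-- summand of L -/
noncomputable def tL (N : ℕ) (t j : ℤ) : ℂ :=
  q ^ (3*j^2 - 2*j) * Cq q N (t - 3*j) - q ^ (3*j^2 - 4*j + 1) * Cq q N (t + 1 - 3*j)

/-- summand of M -/
noncomputable def tM (N : ℕ) (t j : ℤ) : ℂ :=
  q ^ (3*j^2 + j) * Cq q N (t - 1 - 3*j) - q ^ (3*j^2 - j) * Cq q N (t - 3*j)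

noncomputable def Lf (N : ℕ) (t : ℤ) : ℂ := SI (tL q N t) (-(N:ℤ)-1) (2*N+3)
noncomputable def Mf (N : ℕ) (t : ℤ) : ℂ := SI (tM q N t) (-(N:ℤ)-1) (2*N+3)

lemma tL_vanish {N : ℕ} {t j : ℤ} (h : t + 1 < 3*j ∨ 3*j < t - N) : tL q N t j = 0 := by
  rw [tL]
  rcases h with h | h
  · rw [Cq_of_neg q (by omega), Cq_of_neg q (by omega)]; ring
  · rw [Cq_of_gt q (by omega), Cq_of_gt q (by omega)]; ring

lemma tM_vanish {N : ℕ} {t j : ℤ} (h : t < 3*j ∨ 3*j < t - 1 - N) : tM q N t j = 0 := by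
  rw [tM]
  rcases h with h | h
  · rw [Cq_of_neg q (by omega), Cq_of_neg q (by omega)]; ring
  · rw [Cq_of_gt q (by omega), Cq_of_gt q (by omega)]; ring

lemma pA (hq : ‖q‖ < 1) (hq0 : q ≠ 0) (N : ℕ) (t j : ℤ) :
    tL q (N+1) t j = tL q N t j + q ^ ((N:ℤ)+1-t) * tM q N t j := by
  have p1 : Cq q (N+1) (t - 3*j)
      = q ^ ((N:ℤ)+1-(t-3*j)) * Cq q N (t-1-3*j) + Cq q N (t-3*j) := by
    have := pascal2 q hq N (t-3*j)
    rw [show t-3*j-1 = t-1-3*j by ring] at this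
    exact this
  have p2 : Cq q (N+1) (t + 1 - 3*j)
      = q ^ ((N:ℤ)-(t-3*j)) * Cq q N (t-3*j) + Cq q N (t+1-3*j) := by
    have := pascal2 q hq N (t+1-3*j)
    rw [show t+1-3*j-1 = t-3*j by ring,
      show (N:ℤ)+1-(t+1-3*j) = (N:ℤ)-(t-3*j) by ring] at this
    exact this
  rw [tL, p1, p2, tL, tM]
  have k1 : q ^ (3*j^2-2*j) * q ^ ((N:ℤ)+1-(t-3*j)) = q ^ ((N:ℤ)+1-t) * q ^ (3*j^2+j) := by
    rw [← zpow_add₀ hq0, ← zpow_add₀ hq0]; congr 1; ring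
  have k2 : q ^ (3*j^2-4*j+1) * q ^ ((N:ℤ)-(t-3*j)) = q ^ ((N:ℤ)+1-t) * q ^ (3*j^2-j) := by
    rw [← zpow_add₀ hq0, ← zpow_add₀ hq0]; congr 1; ring
  linear_combination Cq q N (t-1-3*j) * k1 - Cq q N (t-3*j) * k2

lemma pA' (hq : ‖q‖ < 1) (hq0 : q ≠ 0) (N : ℕ) (t j : ℤ) :
    tL q (N+1) t j = tL q N (t-1) j + q ^ (t-2) * tM q N (t-2) (j-1) := by
  have p1 : Cq q (N+1) (t - 3*j)
      = Cq q N (t-1-3*j) + q ^ (t-3*j) * Cq q N (t-3*j) := by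
    have := pascal1 q hq N (t-3*j)
    rw [show t-3*j-1 = t-1-3*j by ring] at this
    exact this
  have p2 : Cq q (N+1) (t + 1 - 3*j)
      = Cq q N (t-3*j) + q ^ (t+1-3*j) * Cq q N (t+1-3*j) := by
    have := pascal1 q hq N (t+1-3*j)
    rw [show t+1-3*j-1 = t-3*j by ring] at this
    exact this
  rw [tL, p1, p2, tL, tM]
  rw [show t-2-1-3*(j-1) = t-3*j by ring, show t-2-3*(j-1) = t+1-3*j by ring,
    show t-1+1-3*j = t-3*j by ring]
  have k1 : q ^ (3*j^2-2*j) * q ^ (t-3*j) = q ^ (t-2) * q ^ (3*(j-1)^2+(j-1)) := by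
    rw [← zpow_add₀ hq0, ← zpow_add₀ hq0]; congr 1; ring
  have k2 : q ^ (3*j^2-4*j+1) * q ^ (t+1-3*j) = q ^ (t-2) * q ^ (3*(j-1)^2-(j-1)) := by
    rw [← zpow_add₀ hq0, ← zpow_add₀ hq0]; congr 1; ring
  linear_combination Cq q N (t-3*j) * k1 - Cq q N (t+1-3*j) * k2

lemma pB (hq : ‖q‖ < 1) (hq0 : q ≠ 0) (N : ℕ) (t j : ℤ) :
    tM q (N+1) t j = tM q N (t-1) j + q ^ (t-1) * tL q N (t-1) j := by
  have p1 : Cq q (N+1) (t - 1 - 3*j)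
      = Cq q N (t-2-3*j) + q ^ (t-1-3*j) * Cq q N (t-1-3*j) := by
    have := pascal1 q hq N (t-1-3*j)
    rw [show t-1-3*j-1 = t-2-3*j by ring] at this
    exact this
  have p2 : Cq q (N+1) (t - 3*j)
      = Cq q N (t-1-3*j) + q ^ (t-3*j) * Cq q N (t-3*j) := by
    have := pascal1 q hq N (t-3*j)
    rw [show t-3*j-1 = t-1-3*j by ring] at this
    exact this
  rw [tM, p1, p2, tM, tL]
  rw [show t-1-1-3*j = t-2-3*j by ring, show t-1+1-3*j = t-3*j by ring]
  have k1 : q ^ (3*j^2+j) * q ^ (t-1-3*j) = q ^ (t-1) * q ^ (3*j^2-2*j) := by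
    rw [← zpow_add₀ hq0, ← zpow_add₀ hq0]; congr 1; ring
  have k2 : q ^ (3*j^2-j) * q ^ (t-3*j) = q ^ (t-1) * q ^ (3*j^2-4*j+1) := by
    rw [← zpow_add₀ hq0, ← zpow_add₀ hq0]; congr 1; ring
  linear_combination Cq q N (t-1-3*j) * k1 - Cq q N (t-3*j) * k2

lemma pB' (hq : ‖q‖ < 1) (hq0 : q ≠ 0) (N : ℕ) (t j : ℤ) :
    tM q (N+1) t j = tM q N t j + q ^ ((N:ℤ)+1-t) * tL q N (t+1) (j+1) := by
  have p1 : Cq q (N+1) (t - 1 - 3*j)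
      = q ^ ((N:ℤ)+2-t+3*j) * Cq q N (t-2-3*j) + Cq q N (t-1-3*j) := by
    have := pascal2 q hq N (t-1-3*j)
    rw [show t-1-3*j-1 = t-2-3*j by ring,
      show (N:ℤ)+1-(t-1-3*j) = (N:ℤ)+2-t+3*j by ring] at this
    exact this
  have p2 : Cq q (N+1) (t - 3*j)
      = q ^ ((N:ℤ)+1-t+3*j) * Cq q N (t-1-3*j) + Cq q N (t-3*j) := by
    have := pascal2 q hq N (t-3*j)
    rw [show t-3*j-1 = t-1-3*j by ring,
      show (N:ℤ)+1-(t-3*j) = (N:ℤ)+1-t+3*j by ring] at this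
    exact this
  rw [tM, p1, p2, tM, tL]
  rw [show t+1-3*(j+1) = t-2-3*j by ring, show t+1+1-3*(j+1) = t-1-3*j by ring]
  have k1 : q ^ (3*j^2+j) * q ^ ((N:ℤ)+2-t+3*j) = q ^ ((N:ℤ)+1-t) * q ^ (3*(j+1)^2-2*(j+1)) := by
    rw [← zpow_add₀ hq0, ← zpow_add₀ hq0]; congr 1; ring
  have k2 : q ^ (3*j^2-j) * q ^ ((N:ℤ)+1-t+3*j) = q ^ ((N:ℤ)+1-t) * q ^ (3*(j+1)^2-4*(j+1)+1) := by
    rw [← zpow_add₀ hq0, ← zpow_add₀ hq0]; congr 1; ring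
  linear_combination Cq q N (t-2-3*j) * k1 - Cq q N (t-1-3*j) * k2

lemma Lf_big (N : ℕ) (f : ℤ → ℂ) (hlo : f (-(N:ℤ)-2) = 0) (hhi : f ((N:ℤ)+2) = 0) :
    SI f (-(N:ℤ)-2) (2*N+5) = SI f (-(N:ℤ)-1) (2*N+3) := by
  rw [show 2*N+5 = (2*N+4)+1 by ring]
  rw [show (2*N+4 : ℕ) = (2*N+3)+1 by ring] -- careful ordering
  rw [SI_succ_left, SI_succ_right]
  rw [show (-(N:ℤ)-2) + 1 = -(N:ℤ)-1 by ring,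
    show (-(N:ℤ)-1) + ((2*N+3 : ℕ) : ℤ) = (N:ℤ)+2 by push_cast; ring]
  rw [hlo, hhi]
  ring

lemma Lf_shiftbig_left (N : ℕ) (f : ℤ → ℂ) (h1 : f (-(N:ℤ)-3) = 0) (h2 : f (-(N:ℤ)-2) = 0) :
    SI f (-(N:ℤ)-3) (2*N+5) = SI f (-(N:ℤ)-1) (2*N+3) := by
  rw [show 2*N+5 = ((2*N+3)+1)+1 by ring]
  rw [SI_succ_left, SI_succ_left]
  rw [show (-(N:ℤ)-3) + 1 = -(N:ℤ)-2 by ring, show (-(N:ℤ)-2) + 1 = -(N:ℤ)-1 by ring,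
    h1, h2]
  ring

lemma Lf_shiftbig_right (N : ℕ) (f : ℤ → ℂ) (h1 : f ((N:ℤ)+2) = 0) (h2 : f ((N:ℤ)+3) = 0) :
    SI f (-(N:ℤ)-1) (2*N+5) = SI f (-(N:ℤ)-1) (2*N+3) := by
  rw [show 2*N+5 = ((2*N+3)+1)+1 by ring]
  rw [SI_succ_right, SI_succ_right]
  rw [show (-(N:ℤ)-1) + ((2*N+3 : ℕ) : ℤ) = (N:ℤ)+2 by push_cast; ring,
    show (-(N:ℤ)-1) + (((2*N+3)+1 : ℕ) : ℤ) = (N:ℤ)+3 by push_cast; ring,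
    h1, h2]
  ring

lemma recA (hq : ‖q‖ < 1) (hq0 : q ≠ 0) (N : ℕ) (t : ℤ)
    (ht0 : 0 ≤ t) (ht1 : t ≤ (N:ℤ)+2) :
    Lf q (N+1) t = Lf q N t + q ^ ((N:ℤ)+1-t) * Mf q N t := by
  rw [Lf, show 2*(N+1)+3 = 2*N+5 by ring,
    show (-((N+1:ℕ):ℤ)-1) = -(N:ℤ)-2 by push_cast; ring]
  rw [SI_congr (fun j => pA q hq hq0 N t j)]
  rw [SI_add, SI_smul]
  rw [Lf_big N _ (tL_vanish q (by push_cast; omega)) (tL_vanish q (by push_cast; omega)),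
    Lf_big N _ (tM_vanish q (by push_cast; omega)) (tM_vanish q (by push_cast; omega))]
  rfl

lemma recA' (hq : ‖q‖ < 1) (hq0 : q ≠ 0) (N : ℕ) (t : ℤ)
    (ht0 : 0 ≤ t) (ht1 : t ≤ (N:ℤ)+2) :
    Lf q (N+1) t = Lf q N (t-1) + q ^ (t-2) * Mf q N (t-2) := by
  rw [Lf, show 2*(N+1)+3 = 2*N+5 by ring,
    show (-((N+1:ℕ):ℤ)-1) = -(N:ℤ)-2 by push_cast; ring]
  rw [SI_congr (fun j => pA' q hq hq0 N t j)]
  rw [SI_add, SI_smul]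
  have hshift := SI_shift (tM q N (t-2)) (-1) (-(N:ℤ)-2) (2*N+5)
  simp only [← sub_eq_add_neg] at hshift
  rw [show -(N:ℤ)-2-1 = -(N:ℤ)-3 by ring] at hshift
  rw [hshift]
  rw [Lf_big N _ (tL_vanish q (by push_cast; omega)) (tL_vanish q (by push_cast; omega)),
    Lf_shiftbig_left N _ (tM_vanish q (by push_cast; omega)) (tM_vanish q (by push_cast; omega))]
  rfl

lemma recB (hq : ‖q‖ < 1) (hq0 : q ≠ 0) (N : ℕ) (t : ℤ)
    (ht0 : 0 ≤ t) (ht1 : t ≤ (N:ℤ)+2) :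
    Mf q (N+1) t = Mf q N (t-1) + q ^ (t-1) * Lf q N (t-1) := by
  rw [Mf, show 2*(N+1)+3 = 2*N+5 by ring,
    show (-((N+1:ℕ):ℤ)-1) = -(N:ℤ)-2 by push_cast; ring]
  rw [SI_congr (fun j => pB q hq hq0 N t j)]
  rw [SI_add, SI_smul]
  rw [Lf_big N _ (tM_vanish q (by push_cast; omega)) (tM_vanish q (by push_cast; omega)),
    Lf_big N _ (tL_vanish q (by push_cast; omega)) (tL_vanish q (by push_cast; omega))]
  rfl

lemma recB' (hq : ‖q‖ < 1) (hq0 : q ≠ 0) (N : ℕ) (t : ℤ)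
    (ht0 : 0 ≤ t) (ht1 : t ≤ (N:ℤ)+2) :
    Mf q (N+1) t = Mf q N t + q ^ ((N:ℤ)+1-t) * Lf q N (t+1) := by
  rw [Mf, show 2*(N+1)+3 = 2*N+5 by ring,
    show (-((N+1:ℕ):ℤ)-1) = -(N:ℤ)-2 by push_cast; ring]
  rw [SI_congr (fun j => pB' q hq hq0 N t j)]
  rw [SI_add, SI_smul]
  have hshift := SI_shift (tL q N (t+1)) 1 (-(N:ℤ)-2) (2*N+5)
  rw [show -(N:ℤ)-2+1 = -(N:ℤ)-1 by ring] at hshift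
  rw [hshift]
  rw [Lf_big N _ (tM_vanish q (by push_cast; omega)) (tM_vanish q (by push_cast; omega)),
    Lf_shiftbig_right N _ (tL_vanish q (by push_cast; omega)) (tL_vanish q (by push_cast; omega))]
  rfl

lemma base_L0 (hq : ‖q‖ < 1) : Lf q 0 0 = 1 := by
  rw [Lf]
  norm_num
  rw [show (3 : ℕ) = 2+1 by norm_num, SI_succ_left, SI_succ_left, SI_succ_left]
  rw [SI]
  norm_num
  rw [tL_vanish q (t := 0) (j := -1) (by norm_num), tL_vanish q (t := 0) (j := 1) (by norm_num)]
  rw [tL]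
  norm_num
  rw [Cq_bot q hq, Cq_of_gt q (N := 0) (k := 1) (by norm_num)]
  norm_num

lemma base_L1 : Lf q 0 1 = 0 := by
  rw [Lf]
  norm_num
  rw [show (3 : ℕ) = 2+1 by norm_num, SI_succ_left, SI_succ_left, SI_succ_left]
  rw [SI]
  norm_num
  rw [tL_vanish q (t := 1) (j := -1) (by norm_num), tL_vanish q (t := 1) (j := 1) (by norm_num)]
  rw [tL]
  norm_num
  rw [Cq_of_gt q (N := 0) (k := 1) (by norm_num), Cq_of_gt q (N := 0) (k := 2) (by norm_num)]
  norm_num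

lemma base_M0 (hq : ‖q‖ < 1) : Mf q 0 0 = -1 := by
  rw [Mf]
  norm_num
  rw [show (3 : ℕ) = 2+1 by norm_num, SI_succ_left, SI_succ_left, SI_succ_left]
  rw [SI]
  norm_num
  rw [tM_vanish q (t := 0) (j := -1) (by norm_num), tM_vanish q (t := 0) (j := 1) (by norm_num)]
  rw [tM]
  norm_num
  rw [Cq_bot q hq, Cq_of_neg q (N := 0) (k := -1) (by norm_num)]
  norm_num

lemma base_M1 (hq : ‖q‖ < 1) : Mf q 0 1 = 1 := by
  rw [Mf]
  norm_num
  rw [show (3 : ℕ) = 2+1 by norm_num, SI_succ_left, SI_succ_left, SI_succ_left]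
  rw [SI]
  norm_num
  rw [tM_vanish q (t := 1) (j := -1) (by norm_num), tM_vanish q (t := 1) (j := 1) (by norm_num)]
  rw [tM]
  norm_num
  rw [Cq_bot q hq, Cq_of_gt q (N := 0) (k := 1) (by norm_num)]
  norm_num

lemma diag (hq : ‖q‖ < 1) (hq0 : q ≠ 0) (n : ℕ) :
    Lf q (2*n) (n : ℤ) = q ^ ((n:ℤ)*n - n) ∧ Lf q (2*n) ((n:ℤ)+1) = 0 ∧
      Mf q (2*n) (n : ℤ) = -q ^ ((n:ℤ)*n) ∧ Mf q (2*n) ((n:ℤ)+1) = q ^ ((n:ℤ)*n) := by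
  have pw : ∀ a b : ℤ, q ^ a * q ^ b = q ^ (a + b) := fun a b => (zpow_add₀ hq0 a b).symm
  have pq : ∀ a b : ℤ, a = b → q ^ a = q ^ b := fun a b h => by rw [h]
  induction n with
  | zero =>
    norm_num
    exact ⟨base_L0 q hq, base_L1 q, base_M0 q hq, base_M1 q hq⟩
  | succ n ih =>
    obtain ⟨hL0, hL1, hM0, hM1⟩ := ih
    have eL1 : Lf q (2*n+1) ((n:ℤ)+1) = q ^ ((n:ℤ)*n + n) := by
      have h := recA q hq hq0 (2*n) ((n:ℤ)+1) (by omega) (by push_cast; omega)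
      rw [hL1, hM1, zero_add, show ((2*n:ℕ):ℤ)+1-((n:ℤ)+1) = (n:ℤ) by push_cast; ring,
        pw] at h
      rw [h]
      exact pq _ _ (by ring)
    have eL2 : Lf q (2*n+1) ((n:ℤ)+2) = -q ^ ((n:ℤ)*n + n) := by
      have h := recA' q hq hq0 (2*n) ((n:ℤ)+2) (by omega) (by push_cast; omega)
      rw [show (n:ℤ)+2-1 = (n:ℤ)+1 by ring, show (n:ℤ)+2-2 = (n:ℤ) by ring,
        hL1, hM0, zero_add, mul_neg, pw] at h
      rw [h]
      exact neg_inj.2 (pq _ _ (by ring))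
    have eM1 : Mf q (2*n+1) ((n:ℤ)+1) = 0 := by
      have h := recB q hq hq0 (2*n) ((n:ℤ)+1) (by omega) (by push_cast; omega)
      rw [show (n:ℤ)+1-1 = (n:ℤ) by ring, hL0, hM0, pw,
        show (n:ℤ)+((n:ℤ)*n-n) = (n:ℤ)*n by ring] at h
      rw [h]
      ring
    have eM0 : Mf q (2*n+1) ((n:ℤ)) = -q ^ ((n:ℤ)*n) := by
      have h := recB' q hq hq0 (2*n) ((n:ℤ)) (by omega) (by push_cast; omega)
      rw [hL1, hM0, mul_zero, add_zero] at h
      exact h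
    have h22 : 2*(n+1) = (2*n+1)+1 := by ring
    have hcast : ((n+1:ℕ):ℤ) = (n:ℤ)+1 := by push_cast; ring
    refine ⟨?_, ?_, ?_, ?_⟩
    · rw [h22, hcast]
      have h := recA q hq hq0 (2*n+1) ((n:ℤ)+1) (by omega) (by push_cast; omega)
      rw [show ((2*n+1:ℕ):ℤ)+1-((n:ℤ)+1) = (n:ℤ)+1 by push_cast; ring,
        eL1, eM1, mul_zero, add_zero] at h
      rw [h]
      exact pq _ _ (by ring)
    · rw [h22, hcast, show (n:ℤ)+1+1 = (n:ℤ)+2 by ring]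
      have h := recA' q hq hq0 (2*n+1) ((n:ℤ)+2) (by omega) (by push_cast; omega)
      rw [show (n:ℤ)+2-1 = (n:ℤ)+1 by ring, show (n:ℤ)+2-2 = (n:ℤ) by ring,
        eL1, eM0, mul_neg, pw, show (n:ℤ)+(n:ℤ)*(n:ℤ) = (n:ℤ)*n+n by ring] at h
      rw [h]
      ring
    · rw [h22, hcast]
      have h := recB' q hq hq0 (2*n+1) ((n:ℤ)+1) (by omega) (by push_cast; omega)
      rw [show ((2*n+1:ℕ):ℤ)+1-((n:ℤ)+1) = (n:ℤ)+1 by push_cast; ring,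
        show (n:ℤ)+1+1 = (n:ℤ)+2 by ring, eM1, eL2, zero_add, mul_neg, pw] at h
      rw [h]
      exact neg_inj.2 (pq _ _ (by ring))
    · rw [h22, hcast, show (n:ℤ)+1+1 = (n:ℤ)+2 by ring]
      have h := recB q hq hq0 (2*n+1) ((n:ℤ)+2) (by omega) (by push_cast; omega)
      rw [show (n:ℤ)+2-1 = (n:ℤ)+1 by ring, eM1, eL1, zero_add, pw] at h
      rw [h]
      exact pq _ _ (by ring)

lemma Lf_center (hq : ‖q‖ < 1) (hq0 : q ≠ 0) (n : ℕ) :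
    Lf q (2*n+1) (n : ℤ) = q ^ ((n:ℤ)*n - n) * (1 - q ^ (2*n+1 : ℕ)) := by
  obtain ⟨hL0, hL1, hM0, hM1⟩ := diag q hq hq0 n
  have h := recA q hq hq0 (2*n) ((n:ℤ)) (by omega) (by push_cast; omega)
  rw [hL0, hM0, show ((2*n:ℕ):ℤ)+1-(n:ℤ) = (n:ℤ)+1 by push_cast; ring, mul_neg,
    ← zpow_add₀ hq0] at h
  rw [h, mul_sub, mul_one, ← zpow_natCast q (2*n+1), ← zpow_add₀ hq0]
  rw [show (n:ℤ)+1+(n:ℤ)*n = (n:ℤ)*n-n + (2*n+1 : ℕ) by push_cast; ring]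
  ring
lemma key (n : ℕ) :
    ∑ m ∈ Finset.range (n+1),
      ((q ^ (3*(m:ℤ)^2-2*(m:ℤ)) - q ^ (3*(m:ℤ)^2+4*(m:ℤ)+1)) * Cq q (2*n+1) ((n:ℤ)-3*(m:ℤ))
        - (q ^ (3*(m:ℤ)^2+2*(m:ℤ)) - q ^ (3*(m:ℤ)^2+8*(m:ℤ)+5)) * Cq q (2*n+1) ((n:ℤ)-2-3*(m:ℤ)))
      = Lf q (2*n+1) (n:ℤ) := by
  set SA := ∑ m ∈ Finset.range (2*n+2),
    q ^ (3*(m:ℤ)^2-2*(m:ℤ)) * Cq q (2*n+1) ((n:ℤ)-3*(m:ℤ)) with hSA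
  set SB := ∑ m ∈ Finset.range (2*n+2),
    q ^ (3*(m:ℤ)^2+4*(m:ℤ)+1) * Cq q (2*n+1) ((n:ℤ)-3*(m:ℤ)) with hSB
  set SC := ∑ m ∈ Finset.range (2*n+2),
    q ^ (3*(m:ℤ)^2+2*(m:ℤ)) * Cq q (2*n+1) ((n:ℤ)-2-3*(m:ℤ)) with hSC
  set SD := ∑ m ∈ Finset.range (2*n+2),
    q ^ (3*(m:ℤ)^2+8*(m:ℤ)+5) * Cq q (2*n+1) ((n:ℤ)-2-3*(m:ℤ)) with hSD
  have lhs_eq : ∑ m ∈ Finset.range (n+1),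
      ((q ^ (3*(m:ℤ)^2-2*(m:ℤ)) - q ^ (3*(m:ℤ)^2+4*(m:ℤ)+1)) * Cq q (2*n+1) ((n:ℤ)-3*(m:ℤ))
        - (q ^ (3*(m:ℤ)^2+2*(m:ℤ)) - q ^ (3*(m:ℤ)^2+8*(m:ℤ)+5)) * Cq q (2*n+1) ((n:ℤ)-2-3*(m:ℤ)))
      = SA - SB - SC + SD := by
    have ext : ∑ m ∈ Finset.range (n+1),
        ((q ^ (3*(m:ℤ)^2-2*(m:ℤ)) - q ^ (3*(m:ℤ)^2+4*(m:ℤ)+1)) * Cq q (2*n+1) ((n:ℤ)-3*(m:ℤ))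
          - (q ^ (3*(m:ℤ)^2+2*(m:ℤ)) - q ^ (3*(m:ℤ)^2+8*(m:ℤ)+5)) * Cq q (2*n+1) ((n:ℤ)-2-3*(m:ℤ)))
        = ∑ m ∈ Finset.range (2*n+2),
        ((q ^ (3*(m:ℤ)^2-2*(m:ℤ)) - q ^ (3*(m:ℤ)^2+4*(m:ℤ)+1)) * Cq q (2*n+1) ((n:ℤ)-3*(m:ℤ))
          - (q ^ (3*(m:ℤ)^2+2*(m:ℤ)) - q ^ (3*(m:ℤ)^2+8*(m:ℤ)+5)) * Cq q (2*n+1) ((n:ℤ)-2-3*(m:ℤ))) := by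
      apply Finset.sum_subset (Finset.range_subset_range.2 (by omega))
      intro m hm hm'
      rw [Finset.mem_range] at hm hm'
      rw [Cq_of_neg q (by omega), Cq_of_neg q (by omega)]
      ring
    rw [ext, hSA, hSB, hSC, hSD, ← Finset.sum_sub_distrib, ← Finset.sum_sub_distrib,
      ← Finset.sum_add_distrib]
    apply Finset.sum_congr rfl
    intro m _
    ring
  have negpart : SI (tL q (2*n+1) (n:ℤ)) (-((2*n+1:ℕ):ℤ)-1) (2*n+2)
      = SD - (SB - q * Cq q (2*n+1) (n:ℤ)) := by
    have refl : SI (tL q (2*n+1) (n:ℤ)) (-((2*n+1:ℕ):ℤ)-1) (2*n+2)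
        = ∑ m ∈ Finset.range (2*n+2),
          (q ^ (3*(m:ℤ)^2+8*(m:ℤ)+5) * Cq q (2*n+1) ((n:ℤ)-2-3*(m:ℤ))
            - q ^ (3*(m:ℤ)^2+10*(m:ℤ)+8) * Cq q (2*n+1) ((n:ℤ)-3-3*(m:ℤ))) := by
      rw [SI]
      rw [← Finset.sum_range_reflect]
      apply Finset.sum_congr rfl
      intro m hm
      rw [Finset.mem_range] at hm
      have harg : (-((2*n+1:ℕ):ℤ)-1) + ((2*n+2-1-m : ℕ):ℤ) = -1-(m:ℤ) := by
        have : (2*n+2-1-m : ℕ) = 2*n+1-m := by omega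
        rw [this]
        push_cast [Nat.cast_sub (by omega : m ≤ 2*n+1)]
        ring
      rw [harg, tL]
      rw [show (n:ℤ) - 3*(-1-(m:ℤ)) = (n:ℤ)+3+3*m by ring,
        show (n:ℤ)+1 - 3*(-1-(m:ℤ)) = (n:ℤ)+4+3*m by ring]
      rw [Cq_symm q (2*n+1) ((n:ℤ)+3+3*m), Cq_symm q (2*n+1) ((n:ℤ)+4+3*m)]
      rw [show ((2*n+1:ℕ):ℤ) - ((n:ℤ)+3+3*m) = (n:ℤ)-2-3*m by push_cast; ring,
        show ((2*n+1:ℕ):ℤ) - ((n:ℤ)+4+3*m) = (n:ℤ)-3-3*m by push_cast; ring]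
      rw [show 3*(-1-(m:ℤ))^2 - 2*(-1-(m:ℤ)) = 3*(m:ℤ)^2+8*m+5 by ring,
        show 3*(-1-(m:ℤ))^2 - 4*(-1-(m:ℤ)) + 1 = 3*(m:ℤ)^2+10*m+8 by ring]
    rw [refl, Finset.sum_sub_distrib]
    have c3 : ∑ m ∈ Finset.range (2*n+2),
        q ^ (3*(m:ℤ)^2+10*(m:ℤ)+8) * Cq q (2*n+1) ((n:ℤ)-3-3*(m:ℤ))
        = SB - q * Cq q (2*n+1) (n:ℤ) := by
      have hs := Finset.sum_range_succ'
        (fun m => q ^ (3*(m:ℤ)^2+4*(m:ℤ)+1) * Cq q (2*n+1) ((n:ℤ)-3*(m:ℤ))) (2*n+2)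
      have hlast : ∑ m ∈ Finset.range (2*n+2+1),
          q ^ (3*(m:ℤ)^2+4*(m:ℤ)+1) * Cq q (2*n+1) ((n:ℤ)-3*(m:ℤ))
          = SB := by
        rw [Finset.sum_range_succ, hSB, Cq_of_neg q (by push_cast; omega), mul_zero, add_zero]
      have hzero : q ^ (3*((0:ℕ):ℤ)^2+4*((0:ℕ):ℤ)+1) * Cq q (2*n+1) ((n:ℤ)-3*((0:ℕ):ℤ))
          = q * Cq q (2*n+1) (n:ℤ) := by
        norm_num
      rw [hlast, hzero] at hs
      have hc : ∑ m ∈ Finset.range (2*n+2),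
          q ^ (3*((m+1:ℕ):ℤ)^2+4*((m+1:ℕ):ℤ)+1) * Cq q (2*n+1) ((n:ℤ)-3*((m+1:ℕ):ℤ))
          = ∑ m ∈ Finset.range (2*n+2),
          q ^ (3*(m:ℤ)^2+10*(m:ℤ)+8) * Cq q (2*n+1) ((n:ℤ)-3-3*(m:ℤ)) := by
        apply Finset.sum_congr rfl
        intro m _
        rw [show ((m+1:ℕ):ℤ) = (m:ℤ)+1 by push_cast; ring]
        rw [show 3*((m:ℤ)+1)^2+4*((m:ℤ)+1)+1 = 3*(m:ℤ)^2+10*m+8 by ring,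
          show (n:ℤ)-3*((m:ℤ)+1) = (n:ℤ)-3-3*m by ring]
      rw [hc] at hs
      linear_combination -hs
    rw [c3]
  have pospart : SI (tL q (2*n+1) (n:ℤ)) 0 (2*n+3)
      = SA - (SC + q * Cq q (2*n+1) (n:ℤ)) := by
    have unf : SI (tL q (2*n+1) (n:ℤ)) 0 (2*n+3)
        = ∑ i ∈ Finset.range (2*n+3),
          (q ^ (3*(i:ℤ)^2-2*(i:ℤ)) * Cq q (2*n+1) ((n:ℤ)-3*(i:ℤ))
            - q ^ (3*(i:ℤ)^2-4*(i:ℤ)+1) * Cq q (2*n+1) ((n:ℤ)+1-3*(i:ℤ))) := by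
      rw [SI]
      apply Finset.sum_congr rfl
      intro i _
      rw [zero_add, tL]
    rw [unf, Finset.sum_sub_distrib]
    have c1 : ∑ i ∈ Finset.range (2*n+3),
        q ^ (3*(i:ℤ)^2-2*(i:ℤ)) * Cq q (2*n+1) ((n:ℤ)-3*(i:ℤ)) = SA := by
      rw [show 2*n+3 = (2*n+2)+1 by ring, Finset.sum_range_succ, hSA,
        Cq_of_neg q (by push_cast; omega), mul_zero, add_zero]
    have c2 : ∑ i ∈ Finset.range (2*n+3),
        q ^ (3*(i:ℤ)^2-4*(i:ℤ)+1) * Cq q (2*n+1) ((n:ℤ)+1-3*(i:ℤ))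
        = SC + q * Cq q (2*n+1) (n:ℤ) := by
      have hs := Finset.sum_range_succ'
        (fun i => q ^ (3*(i:ℤ)^2-4*(i:ℤ)+1) * Cq q (2*n+1) ((n:ℤ)+1-3*(i:ℤ))) (2*n+2)
      have hzero : q ^ (3*((0:ℕ):ℤ)^2-4*((0:ℕ):ℤ)+1) * Cq q (2*n+1) ((n:ℤ)+1-3*((0:ℕ):ℤ))
          = q * Cq q (2*n+1) (n:ℤ) := by
        rw [show 3*((0:ℕ):ℤ)^2-4*((0:ℕ):ℤ)+1 = 1 by norm_num, zpow_one,
          show (n:ℤ)+1-3*((0:ℕ):ℤ) = (n:ℤ)+1 by norm_num,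
          Cq_symm q (2*n+1) ((n:ℤ)+1),
          show ((2*n+1:ℕ):ℤ) - ((n:ℤ)+1) = (n:ℤ) by push_cast; ring]
      have hc : ∑ i ∈ Finset.range (2*n+2),
          q ^ (3*((i+1:ℕ):ℤ)^2-4*((i+1:ℕ):ℤ)+1) * Cq q (2*n+1) ((n:ℤ)+1-3*((i+1:ℕ):ℤ))
          = SC := by
        rw [hSC]
        apply Finset.sum_congr rfl
        intro i _
        rw [show ((i+1:ℕ):ℤ) = (i:ℤ)+1 by push_cast; ring]
        rw [show 3*((i:ℤ)+1)^2-4*((i:ℤ)+1)+1 = 3*(i:ℤ)^2+2*i by ring,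
          show (n:ℤ)+1-3*((i:ℤ)+1) = (n:ℤ)-2-3*i by ring]
      rw [hzero, hc] at hs
      rw [show 2*n+3 = 2*n+2+1 by ring, hs]
    rw [c1, c2]
  have rhs_eq : Lf q (2*n+1) (n:ℤ) = SA - SB - SC + SD := by
    rw [Lf, show 2*(2*n+1)+3 = (2*n+2)+(2*n+3) by ring, SI_split,
      show (-((2*n+1:ℕ):ℤ)-1) + ((2*n+2 : ℕ):ℤ) = 0 by push_cast; ring,
      negpart, pospart]
    ring
  rw [lhs_eq, rhs_eq]

lemma sum_range_mul3 (f : ℕ → ℂ) (M : ℕ) :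
    ∑ r ∈ Finset.range (3*M), f r
      = ∑ m ∈ Finset.range M, (f (3*m) + f (3*m+1) + f (3*m+2)) := by
  induction M with
  | zero => simp
  | succ M ih =>
    rw [show 3*(M+1) = ((3*M+1)+1)+1 by ring, Finset.sum_range_succ, Finset.sum_range_succ,
      Finset.sum_range_succ, ih, Finset.sum_range_succ]
    rw [show (3*M+1)+1 = 3*M+2 by ring]
    ring

end Aux


/-- A Bailey pair relative to `q` (Warnaar/Slater):
with `α` defined by cases mod 3 and `β_n = q^{n(n-1)}/(q;q)_{2n}`. -/
theorem slater_bailey_pair_mod3 (q : ℂ) (hq : ‖q‖ < 1) (α : ℕ → ℂ)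
    (h0 : ∀ m : ℕ, α (3 * m) =
      q ^ ((3 * (m : ℤ) - 2) * (m : ℤ)) * (1 - q ^ (6 * m + 1)) / (1 - q))
    (h1 : ∀ m : ℕ, α (3 * m + 1) = 0)
    (h2 : ∀ m : ℕ, α (3 * m + 2) =
      -(q ^ ((3 * (m : ℤ) + 2) * (m : ℤ)) * (1 - q ^ (6 * m + 5)) / (1 - q)))
    (n : ℕ) :
    q ^ (n * (n - 1)) / poch q q (2 * n) =
      ∑ r ∈ Finset.range (n + 1), α r / (poch q q (n - r) * poch (q ^ 2) q (n + r)) := by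
  by_cases hq0 : q = 0
  · -- degenerate case q = 0
    subst hq0
    have hp : ∀ (x : ℂ) (m : ℕ), poch x 0 m = ∏ k ∈ Finset.range m, (1 - x * 0 ^ k) := by
      intro x m; rfl
    have hp0 : ∀ m : ℕ, poch (0:ℂ) 0 m = 1 := by
      intro m; rw [poch]; apply Finset.prod_eq_one; intro k _; simp
    have hp2 : ∀ m : ℕ, poch ((0:ℂ)^2) 0 m = 1 := by
      intro m; rw [poch]; apply Finset.prod_eq_one; intro k _; norm_num
    have hα0 : α 0 = 1 := by
      have := h0 0
      norm_num at this
      exact this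
    have hα2 : α 2 = -1 := by
      have := h2 0
      norm_num at this
      exact this
    have hαbig : ∀ r, 3 ≤ r → α r = 0 := by
      intro r hr
      have hsplit : r % 3 = 0 ∨ r % 3 = 1 ∨ r % 3 = 2 := by omega
      have hdm := Nat.div_add_mod r 3
      set m := r / 3 with hm
      have hm1 : 1 ≤ m := by omega
      rcases hsplit with h | h | h
      · have hr3 : r = 3*m := by omega
        rw [hr3, h0 m, zero_zpow _ (by
          have : (1:ℤ) ≤ (m:ℤ) := by exact_mod_cast hm1
          intro hcon
          rcases mul_eq_zero.1 hcon with h' | h' <;> omega)]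
        ring
      · have hr3 : r = 3*m+1 := by omega
        rw [hr3, h1 m]
      · have hr3 : r = 3*m+2 := by omega
        rw [hr3, h2 m, zero_zpow _ (by
          have : (1:ℤ) ≤ (m:ℤ) := by exact_mod_cast hm1
          intro hcon
          rcases mul_eq_zero.1 hcon with h' | h' <;> omega)]
        ring
    simp only [hp0, hp2, mul_one, one_mul, div_one]
    rcases Nat.lt_or_ge n 2 with hn | hn
    · interval_cases n
      · norm_num [hα0]
      · rw [Finset.sum_range_succ, Finset.sum_range_succ, Finset.range_zero,
          Finset.sum_empty, hα0, h1 0]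
        norm_num
    · have hLHS : (0:ℂ) ^ (n*(n-1)) = 0 := by
        apply zero_pow
        have : 2 ≤ n := hn
        have : 1 ≤ n - 1 := by omega
        positivity
      rw [hLHS]
      have hext : ∑ r ∈ Finset.range (n+1), α r = ∑ r ∈ Finset.range 3, α r := by
        symm
        apply Finset.sum_subset (Finset.range_subset_range.2 (by omega))
        intro r _ hr
        rw [Finset.mem_range] at hr
        exact hαbig r (by omega)
      rw [hext, Finset.sum_range_succ, Finset.sum_range_succ, Finset.sum_range_succ,
        Finset.range_zero, Finset.sum_empty, hα0, h1 0, hα2]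
      norm_num
  · -- main case q ≠ 0
    have h1q := one_sub_q_ne q hq
    have hP := pochq_ne q hq
    have term_eq : ∀ r ∈ Finset.range (n+1),
        α r / (poch q q (n - r) * poch (q ^ 2) q (n + r))
          = ((1-q) * α r) * Cq q (2*n+1) ((n:ℤ)-(r:ℤ)) / poch q q (2*n+1) := by
      intro r hr
      rw [Finset.mem_range] at hr
      have hrn : r ≤ n := by omega
      have hpoch2 : poch (q^2) q (n+r) = poch q q (n+r+1) / (1-q) := by
        rw [eq_div_iff h1q, mul_comm]
        exact poch_q2 q (n+r)
      have hCq : Cq q (2*n+1) ((n:ℤ)-(r:ℤ))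
          = poch q q (2*n+1) / (poch q q (n-r) * poch q q (n+r+1)) := by
        rw [show (n:ℤ)-(r:ℤ) = ((n-r : ℕ) : ℤ) by push_cast [Nat.cast_sub hrn]; ring,
          Cq_natCast q (2*n+1) (n-r) (by omega)]
        rw [show 2*n+1-(n-r) = n+r+1 by omega]
      rw [hpoch2, hCq]
      have hx1 := hP (n-r)
      have hx2 := hP (n+r+1)
      have hx3 := hP (2*n+1)
      field_simp
    rw [Finset.sum_congr rfl term_eq, ← Finset.sum_div]
    have csum : ∑ r ∈ Finset.range (n+1), ((1-q) * α r) * Cq q (2*n+1) ((n:ℤ)-(r:ℤ))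
        = Lf q (2*n+1) (n:ℤ) := by
      have hext : ∑ r ∈ Finset.range (n+1), ((1-q) * α r) * Cq q (2*n+1) ((n:ℤ)-(r:ℤ))
          = ∑ r ∈ Finset.range (3*(n+1)), ((1-q) * α r) * Cq q (2*n+1) ((n:ℤ)-(r:ℤ)) := by
        apply Finset.sum_subset (Finset.range_subset_range.2 (by omega))
        intro r hr hr'
        rw [Finset.mem_range] at hr hr'
        rw [Cq_of_neg q (by omega), mul_zero]
      rw [hext, sum_range_mul3]
      rw [← key q n]
      apply Finset.sum_congr rfl
      intro m _
      have e0 : (1-q) * α (3*m) = q ^ (3*(m:ℤ)^2-2*(m:ℤ)) - q ^ (3*(m:ℤ)^2+4*(m:ℤ)+1) := by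
        rw [h0 m, mul_comm, div_mul_cancel₀ _ h1q, mul_sub, mul_one,
          ← zpow_natCast q (6*m+1), ← zpow_add₀ hq0,
          show (3*(m:ℤ)-2)*(m:ℤ) = 3*(m:ℤ)^2-2*(m:ℤ) by ring,
          show 3*(m:ℤ)^2-2*(m:ℤ) + ((6*m+1 : ℕ) : ℤ) = 3*(m:ℤ)^2+4*(m:ℤ)+1 by push_cast; ring]
      have e2 : (1-q) * α (3*m+2) = -(q ^ (3*(m:ℤ)^2+2*(m:ℤ)) - q ^ (3*(m:ℤ)^2+8*(m:ℤ)+5)) := by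
        rw [h2 m, mul_neg, mul_comm, div_mul_cancel₀ _ h1q, mul_sub, mul_one,
          ← zpow_natCast q (6*m+5), ← zpow_add₀ hq0,
          show (3*(m:ℤ)+2)*(m:ℤ) = 3*(m:ℤ)^2+2*(m:ℤ) by ring,
          show 3*(m:ℤ)^2+2*(m:ℤ) + ((6*m+5 : ℕ) : ℤ) = 3*(m:ℤ)^2+8*(m:ℤ)+5 by push_cast; ring]
      rw [h1 m, mul_zero, zero_mul, add_zero, e0, e2]
      rw [show ((3*m : ℕ) : ℤ) = 3*(m:ℤ) by push_cast; ring,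
        show ((3*m+2 : ℕ) : ℤ) = 3*(m:ℤ)+2 by push_cast; ring,
        show (n:ℤ) - (3*(m:ℤ)+2) = (n:ℤ)-2-3*(m:ℤ) by ring]
      ring
    rw [csum, Lf_center q hq hq0 n]
    rw [poch_q_succ q (2*n)]
    have hX : (1:ℂ) - q^(2*n+1) ≠ 0 := one_sub_pow_ne q hq (by omega)
    have hcan : q ^ ((n:ℤ)*(n:ℤ) - (n:ℤ)) * (1 - q^(2*n+1)) / (poch q q (2*n) * (1 - q^(2*n+1)))
        = q ^ ((n:ℤ)*(n:ℤ) - (n:ℤ)) / poch q q (2*n) := by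
      rw [mul_div_mul_right _ _ hX]
    rw [hcan]
    have expeq : ((n*(n-1) : ℕ) : ℤ) = (n:ℤ)*(n:ℤ) - (n:ℤ) := by
      cases n with
      | zero => norm_num
      | succ k => push_cast [Nat.succ_sub_one]; ring
    rw [← zpow_natCast q (n*(n-1)), expeq]
end

section
/- Define α_{2n} = (-1)^n q^{n^2-n} (1-q^{4n+2})/(1-q^2), α_{2n+1} = 0, and β_n = (-q;q)_n q^{n(n-1)/2} / (q^2;q)_{2n}. Then for every n≥0, β_n = Σ_{r=0}^n α_r / ((q;q)_{n-r} (q^3;q)_{n+r}). -/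
open scoped BigOperators

lemma poch_succ (x q : ℂ) (N : ℕ) : poch x q (N + 1) = poch x q N * (1 - x * q ^ N) :=
  Finset.prod_range_succ _ _

lemma poch_zero (x q : ℂ) : poch x q 0 = 1 := by simp [poch]

/-- WZ certificate for the Bailey pair. -/
noncomputable def wzGm (q : ℂ) (n m : ℕ) : ℂ :=
  if n + 1 < 2 * m then 0
  else -((-1 : ℂ) ^ m * q ^ (m * (m - 1)) * (1 - q ^ (2 * m))) /
    ((1 - q ^ 2) * (1 - q * q ^ n) * (1 - q * q ^ (2 * n + 2)) *
      poch q q (n + 1 - 2 * m) * poch (q ^ 3) q (n + 2 * m - 1))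

private lemma div4 {a b c d e f g h : ℂ} (hb : b ≠ 0) (hd : d ≠ 0) (hf : f ≠ 0) (hh : h ≠ 0)
    (H : a * d * (f * h) - c * b * (f * h) = e * h * (b * d) - g * f * (b * d)) :
    a / b - c / d = e / f - g / h := by
  rw [div_sub_div _ _ hb hd, div_sub_div _ _ hf hh,
    div_eq_div_iff (mul_ne_zero hb hd) (mul_ne_zero hf hh)]
  linear_combination H

private lemma div3 {a b c d e f : ℂ} (hb : b ≠ 0) (hd : d ≠ 0) (hf : f ≠ 0)
    (H : a * d * f - c * b * f = e * (b * d)) :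
    a / b - c / d = e / f := by
  rw [div_sub_div _ _ hb hd, div_eq_div_iff (mul_ne_zero hb hd) hf]
  linear_combination H

private lemma div2 {a b c d : ℂ} (hb : b ≠ 0) (hd : d ≠ 0)
    (H : a * d + c * b = 0) : a / b + c / d = 0 := by
  rw [div_add_div _ _ hb hd, div_eq_zero_iff]
  left; linear_combination H

private lemma div1 {a b c d : ℂ} (hb : b ≠ 0) (hd : d ≠ 0)
    (H : a * d = c * b) : a / b = c / d := by
  rw [div_eq_div_iff hb hd]; linear_combination H

set_option maxHeartbeats 3200000 in
/-- A Bailey pair relative to `q²` derived from Slater's ₆ψ₆ summation. -/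
theorem slater_bailey_pair_mod2 (q : ℂ) (hq : ‖q‖ < 1) (α : ℕ → ℂ)
    (h0 : ∀ m : ℕ, α (2 * m) =
      (-1 : ℂ) ^ m * q ^ (m * (m - 1)) * (1 - q ^ (4 * m + 2)) / (1 - q ^ 2))
    (h1 : ∀ m : ℕ, α (2 * m + 1) = 0)
    (n : ℕ) :
    poch (-q) q n * q ^ (n * (n - 1) / 2) / poch (q ^ 2) q (2 * n) =
      ∑ r ∈ Finset.range (n + 1), α r / (poch q q (n - r) * poch (q ^ 3) q (n + r)) := by
  -- nonvanishing facts
  have habs : ∀ x : ℂ, ‖x‖ < 1 → (1 : ℂ) - x ≠ 0 := by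
    intro x hx h
    rw [sub_eq_zero] at h
    rw [← h] at hx
    simp at hx
  have hmul : ∀ x : ℂ, ‖x‖ < 1 → ∀ i : ℕ, (1 : ℂ) - x * q ^ i ≠ 0 := by
    intro x hx i
    apply habs
    rw [norm_mul, norm_pow]
    calc ‖x‖ * ‖q‖ ^ i ≤ ‖x‖ * 1 := by
          exact mul_le_mul_of_nonneg_left
            (pow_le_one₀ (norm_nonneg _) hq.le) (norm_nonneg _)
      _ = ‖x‖ := mul_one _
      _ < 1 := hx
  have habs2 : ‖q ^ 2‖ < 1 := by
    rw [norm_pow]; exact pow_lt_one₀ (norm_nonneg _) hq (by norm_num)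
  have habs3 : ‖q ^ 3‖ < 1 := by
    rw [norm_pow]; exact pow_lt_one₀ (norm_nonneg _) hq (by norm_num)
  have habsm : ‖-q‖ < 1 := by rw [norm_neg]; exact hq
  have hA : ∀ i : ℕ, (1 : ℂ) - q * q ^ i ≠ 0 := hmul q hq
  have hB : ∀ i : ℕ, (1 : ℂ) - q ^ 2 * q ^ i ≠ 0 := hmul _ habs2
  have hC : ∀ i : ℕ, (1 : ℂ) - q ^ 3 * q ^ i ≠ 0 := hmul _ habs3
  have hD : ∀ i : ℕ, (1 : ℂ) - (-q) * q ^ i ≠ 0 := hmul _ habsm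
  have hq2' : (1 : ℂ) - q ^ 2 ≠ 0 := by
    have := hB 0; simpa using this
  have hA0 : (1 : ℂ) - q ≠ 0 := by
    have := hA 0; simpa using this
  have hpq : ∀ N : ℕ, poch q q N ≠ 0 := by
    intro N; unfold poch; rw [Finset.prod_ne_zero_iff]; intro i _; exact hA i
  have hp2 : ∀ N : ℕ, poch (q ^ 2) q N ≠ 0 := by
    intro N; unfold poch; rw [Finset.prod_ne_zero_iff]; intro i _; exact hB i
  have hp3 : ∀ N : ℕ, poch (q ^ 3) q N ≠ 0 := by
    intro N; unfold poch; rw [Finset.prod_ne_zero_iff]; intro i _; exact hC i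
  have hpm : ∀ N : ℕ, poch (-q) q N ≠ 0 := by
    intro N; unfold poch; rw [Finset.prod_ne_zero_iff]; intro i _; exact hD i
  induction n with
  | zero =>
      have ha0 : α 0 = 1 := by
        have h := h0 0
        norm_num at h
        rw [h, div_self hq2']
      simp [poch, Finset.sum_range_one, ha0]
  | succ n IH =>
      -- the WZ telescoping function
      set f : ℕ → ℂ := fun r => wzGm q n ((r + 1) / 2) with hf
      have hf0 : f 0 = 0 := by
        simp only [hf, wzGm]
        norm_num
      -- pointwise WZ relation
      have key : ∀ r ≤ n,
          α r / (poch q q (n + 1 - r) * poch (q ^ 3) q (n + 1 + r)) -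
            q ^ n / ((1 - q * q ^ n) * (1 - q * q ^ (2 * n + 2))) *
              (α r / (poch q q (n - r) * poch (q ^ 3) q (n + r))) =
          f (r + 1) - f r := by
        intro r hr
        rcases Nat.even_or_odd r with ⟨m, hm⟩ | ⟨m, hm⟩
        · -- r even
          subst hm
          rw [show m + m = 2 * m from by omega] at hr ⊢
          simp only [hf]
          rw [show (2 * m + 1 + 1) / 2 = m + 1 from by omega,
            show (2 * m + 1) / 2 = m from by omega]
          rcases Nat.lt_or_ge (2 * m) n with hlt | hge
          · -- main case : 2m < n
            obtain ⟨k, rfl⟩ : ∃ k, n = 2 * m + (k + 1) := ⟨n - 2 * m - 1, by omega⟩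
            rw [h0 m]
            simp only [wzGm]
            rw [if_neg (by omega), if_neg (by omega)]
            rw [show 2 * m + (k + 1) + 2 * (m + 1) - 1 = 4 * m + k + 2 from by omega,
              show 2 * m + (k + 1) + 2 * m - 1 = 4 * m + k from by omega,
              show 2 * m + (k + 1) + 1 - 2 * (m + 1) = k from by omega,
              show 2 * m + (k + 1) + 1 - 2 * m = k + 2 from by omega,
              show 2 * m + (k + 1) + 1 + 2 * m = 4 * m + k + 2 from by omega,
              show 2 * m + (k + 1) - 2 * m = k + 1 from by omega,
              show 2 * m + (k + 1) + 2 * m = 4 * m + k + 1 from by omega]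
            rw [show (k + 2 : ℕ) = (k + 1) + 1 from by omega,
              show (4 * m + k + 2 : ℕ) = (4 * m + k + 1) + 1 from by omega,
              show (4 * m + k + 1 : ℕ) = (4 * m + k) + 1 from by omega]
            simp only [poch_succ]
            simp only [Nat.add_sub_cancel]
            rw [show (m + 1) * m = m * (m - 1) + (m + m) from by
              cases m with
              | zero => rfl
              | succ j => simp [Nat.succ_sub_one]; ring]
            rw [pow_add ((q : ℂ)) (m * (m - 1)) (m + m), pow_succ ((-1 : ℂ)) m]
            simp only [div_div]
            rw [div_mul_div_comm]
            rw [div_sub_div _ _ (by repeat' first | apply mul_ne_zero | exact hq2' | exact hA _ | exact hB _ | exact hC _ | exact hD _ | exact hpq _ | exact hp2 _ | exact hp3 _ | exact hpm _ | exact hA0 | exact one_ne_zero) (by repeat' first | apply mul_ne_zero | exact hq2' | exact hA _ | exact hB _ | exact hC _ | exact hD _ | exact hpq _ | exact hp2 _ | exact hp3 _ | exact hpm _ | exact hA0 | exact one_ne_zero), div_sub_div _ _ (by repeat' first | apply mul_ne_zero | exact hq2' | exact hA _ | exact hB _ | exact hC _ | exact hD _ | exact hpq _ | exact hp2 _ |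 exact hp3 _ | exact hpm _ | exact hA0 | exact one_ne_zero) (by repeat' first | apply mul_ne_zero | exact hq2' | exact hA _ | exact hB _ | exact hC _ | exact hD _ | exact hpq _ | exact hp2 _ | exact hp3 _ | exact hpm _ | exact hA0 | exact one_ne_zero),
              div_eq_div_iff (by repeat' first | apply mul_ne_zero | exact hq2' | exact hA _ | exact hB _ | exact hC _ | exact hD _ | exact hpq _ | exact hp2 _ | exact hp3 _ | exact hpm _ | exact hA0 | exact one_ne_zero) (by repeat' first | apply mul_ne_zero | exact hq2' | exact hA _ | exact hB _ | exact hC _ | exact hD _ | exact hpq _ | exact hp2 _ | exact hp3 _ | exact hpm _ | exact hA0 | exact one_ne_zero)]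
            ring
          · -- top even case : 2m = n
            have hn : n = 2 * m := by omega
            subst hn
            cases m with
            | zero =>
                rw [h0 0]
                simp only [wzGm]
                rw [if_pos (by omega), if_neg (by omega)]
                norm_num [poch_zero, poch_succ]
                have e1 : (1 : ℂ) - q ≠ 0 := by simpa using hA 0
                have e2 : (1 : ℂ) - q * q ^ 2 ≠ 0 := hA 2
                have e3 : (1 : ℂ) - q ^ 3 ≠ 0 := by simpa using hC 0
                field_simp
                ring
            | succ i =>
                rw [h0 (i + 1)]
                simp only [wzGm]
                rw [if_pos (by omega), if_neg (by omega)]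
                rw [show 2 * (i + 1) + 2 * (i + 1) - 1 = 4 * i + 3 from by omega,
                  show 2 * (i + 1) + 1 - 2 * (i + 1) = 0 + 1 from by omega,
                  show 2 * (i + 1) + 1 + 2 * (i + 1) = 4 * i + 5 from by omega,
                  show 2 * (i + 1) - 2 * (i + 1) = 0 from by omega,
                  show 2 * (i + 1) + 2 * (i + 1) = 4 * i + 4 from by omega]
                rw [show (4 * i + 5 : ℕ) = (4 * i + 3) + 1 + 1 from by omega,
                  show (4 * i + 4 : ℕ) = (4 * i + 3) + 1 from by omega]
                simp only [poch_succ, poch_zero, Nat.add_sub_cancel, pow_zero]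
                simp only [mul_one, one_mul]
                rw [zero_sub, neg_div, neg_neg]
                simp only [div_div]
                rw [div_mul_div_comm]
                rw [div_sub_div _ _ (by repeat' first | apply mul_ne_zero | exact hq2' | exact hA _ | exact hB _ | exact hC _ | exact hD _ | exact hpq _ | exact hp2 _ | exact hp3 _ | exact hpm _ | exact hA0 | exact one_ne_zero) (by repeat' first | apply mul_ne_zero | exact hq2' | exact hA _ | exact hB _ | exact hC _ | exact hD _ | exact hpq _ | exact hp2 _ | exact hp3 _ | exact hpm _ | exact hA0 | exact one_ne_zero), div_eq_div_iff (by repeat' first | apply mul_ne_zero | exact hq2' | exact hA _ | exact hB _ | exact hC _ | exact hD _ | exact hpq _ | exact hp2 _ | exact hp3 _ | exact hpm _ | exact hA0 | exact one_ne_zero) (by repeat' first | apply mul_ne_zero | exact hq2' | exact hA _ | exact hB _ | exact hC _ | exact hD _ | exact hpq _ | exact hp2 _ | exact hp3 _ | exact hpm _ | exact hA0 | exact one_ne_zero)]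
                ring
        · -- r odd : both sides vanish
          subst hm
          rw [h1 m]
          simp only [hf]
          rw [show (2 * m + 1 + 1 + 1) / 2 = m + 1 from by omega,
            show (2 * m + 1 + 1) / 2 = m + 1 from by omega]
          simp
      -- telescoping
      have htel : ∑ r ∈ Finset.range (n + 1),
          (α r / (poch q q (n + 1 - r) * poch (q ^ 3) q (n + 1 + r)) -
            q ^ n / ((1 - q * q ^ n) * (1 - q * q ^ (2 * n + 2))) *
              (α r / (poch q q (n - r) * poch (q ^ 3) q (n + r)))) =
          f (n + 1) - f 0 := by
        rw [Finset.sum_congr rfl fun r hrr => key r (by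
          simpa [Nat.lt_succ_iff] using Finset.mem_range.mp hrr)]
        exact Finset.sum_range_sub f (n + 1)
      -- top boundary
      have htop : α (n + 1) / (poch q q (n + 1 - (n + 1)) * poch (q ^ 3) q (n + 1 + (n + 1)))
          + f (n + 1) = 0 := by
        simp only [hf]
        rcases Nat.even_or_odd n with ⟨i, hn⟩ | ⟨i, hn⟩
        · -- n even : both terms vanish
          subst hn
          rw [show i + i + 1 = 2 * i + 1 from by omega, h1 i]
          simp only [wzGm]
          rw [show (2 * i + 1 + 1) / 2 = i + 1 from by omega, if_pos (by omega)]
          simp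
        · -- n odd
          subst hn
          rw [show 2 * i + 1 + 1 = 2 * (i + 1) from by omega, h0 (i + 1)]
          simp only [wzGm]
          rw [show (2 * (i + 1) + 1) / 2 = i + 1 from by omega]
          rw [if_neg (by omega)]
          rw [show 2 * i + 1 + 1 - 2 * (i + 1) = 0 from by omega,
            show 2 * i + 1 + 2 * (i + 1) - 1 = 4 * i + 2 from by omega,
            show 2 * (i + 1) - 2 * (i + 1) = 0 from by omega,
            show 2 * (i + 1) + 2 * (i + 1) = 4 * i + 4 from by omega]
          rw [show (4 * i + 4 : ℕ) = (4 * i + 2) + 1 + 1 from by omega]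
          simp only [poch_succ, poch_zero, Nat.add_sub_cancel, pow_zero]
          simp only [mul_one, one_mul]
          simp only [div_div]
          rw [div_add_div _ _ (by repeat' first | apply mul_ne_zero | exact hq2' | exact hA _ | exact hB _ | exact hC _ | exact hD _ | exact hpq _ | exact hp2 _ | exact hp3 _ | exact hpm _ | exact hA0 | exact one_ne_zero) (by repeat' first | apply mul_ne_zero | exact hq2' | exact hA _ | exact hB _ | exact hC _ | exact hD _ | exact hpq _ | exact hp2 _ | exact hp3 _ | exact hpm _ | exact hA0 | exact one_ne_zero), div_eq_zero_iff]
          left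
          ring
      -- beta recurrence
      have hbeta : poch (-q) q (n + 1) * q ^ ((n + 1) * (n + 1 - 1) / 2) /
            poch (q ^ 2) q (2 * (n + 1)) =
          q ^ n / ((1 - q * q ^ n) * (1 - q * q ^ (2 * n + 2))) *
            (poch (-q) q n * q ^ (n * (n - 1) / 2) / poch (q ^ 2) q (2 * n)) := by
        rw [Nat.triangle_succ, pow_add, poch_succ,
          show 2 * (n + 1) = (2 * n + 1) + 1 from by omega, poch_succ,
          show (2 * n + 1 : ℕ) = (2 * n) + 1 from rfl, poch_succ]
        rw [div_mul_div_comm]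
        rw [div_eq_div_iff (by repeat' first | apply mul_ne_zero | exact hq2' | exact hA _ | exact hB _ | exact hC _ | exact hD _ | exact hpq _ | exact hp2 _ | exact hp3 _ | exact hpm _ | exact hA0 | exact one_ne_zero) (by repeat' first | apply mul_ne_zero | exact hq2' | exact hA _ | exact hB _ | exact hC _ | exact hD _ | exact hpq _ | exact hp2 _ | exact hp3 _ | exact hpm _ | exact hA0 | exact one_ne_zero)]
        ring
      -- assemble
      rw [Finset.sum_range_succ, hbeta, IH]
      have hsplit : ∑ r ∈ Finset.range (n + 1),
          α r / (poch q q (n + 1 - r) * poch (q ^ 3) q (n + 1 + r)) =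
          q ^ n / ((1 - q * q ^ n) * (1 - q * q ^ (2 * n + 2))) *
            (∑ r ∈ Finset.range (n + 1), α r / (poch q q (n - r) * poch (q ^ 3) q (n + r)))
          + f (n + 1) := by
        rw [Finset.mul_sum, ← sub_eq_iff_eq_add', ← Finset.sum_sub_distrib]
        rw [htel, hf0, sub_zero]
      rw [hsplit]
      linear_combination -htop
end

section
/- Define α_n = (-1)^n q^{(n^2-3n)/4} (1-q^{2n+1})/(1-q) and β_n = (-1)^n q^{n^2/2 - n} (q^{1/2};q)_n / (q;q)_{2n} (interpreted with q^{1/2} a fixed square root of q). Then for every n≥0, β_n = Σ_{r=0}^n α_r / ((q;q)_{n-r} (q^2;q)_{n+r}). -/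
open scoped BigOperators

/-- `(q;q)_m` with `q = s²`. -/
noncomputable def PP (s : ℂ) (m : ℕ) : ℂ := poch (s^2) (s^2) m

/-- Gaussian binomial `[N, m]` in base `s²`, as a quotient. -/
noncomputable def gb (s : ℂ) (N m : ℕ) : ℂ :=
  if m ≤ N then PP s N / (PP s m * PP s (N - m)) else 0

/-- `choose m 2` valued in `ℤ`. -/
def c2 : ℕ → ℤ
  | 0 => 0
  | (m+1) => c2 m + m

/-- coefficient `(-1)^m s^{C(m,2)+t m}`. -/
noncomputable def cc (s : ℂ) (m : ℕ) (t : ℤ) : ℂ := (-1)^m * s ^ (c2 m + t * m)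

noncomputable def Gs (s : ℂ) (N : ℕ) (t : ℤ) : ℂ :=
  ∑ m ∈ Finset.range (N+1), cc s m t * gb s N m

lemma c2_double (m : ℕ) : 2 * c2 m = m * (m - 1) := by
  induction m with
  | zero => simp [c2]
  | succ k ih => simp only [c2]; push_cast; push_cast at ih; ring_nf; ring_nf at ih; omega

lemma PP_zero (s : ℂ) : PP s 0 = 1 := by simp [PP, poch]

lemma PP_succ (s : ℂ) (m : ℕ) : PP s (m+1) = PP s m * (1 - s ^ (2*m+2)) := by
  simp only [PP, poch, Finset.prod_range_succ]
  congr 1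
  rw [← pow_mul]
  ring_nf

lemma PP_ne (s : ℂ) (hne : ∀ k : ℕ, (1 : ℂ) - s ^ (k+1) ≠ 0) (m : ℕ) : PP s m ≠ 0 := by
  induction m with
  | zero => rw [PP_zero]; exact one_ne_zero
  | succ k ih =>
      rw [PP_succ]
      exact mul_ne_zero ih (by simpa using hne (2*k+1))

lemma gb_zero (s : ℂ) (hne : ∀ k : ℕ, (1 : ℂ) - s ^ (k+1) ≠ 0) (N : ℕ) : gb s N 0 = 1 := by
  simp [gb, PP_zero, div_self (PP_ne s hne N)]

lemma gb_self (s : ℂ) (hne : ∀ k : ℕ, (1 : ℂ) - s ^ (k+1) ≠ 0) (N : ℕ) : gb s N N = 1 := by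
  simp [gb, PP_zero, div_self (PP_ne s hne N)]

lemma gb_of_gt (s : ℂ) {N m : ℕ} (h : N < m) : gb s N m = 0 := by
  simp [gb, Nat.not_le.mpr h]

lemma pascal1_s8 (s : ℂ) (hne : ∀ k : ℕ, (1 : ℂ) - s ^ (k+1) ≠ 0) {N m : ℕ} (h : m ≤ N) :
    gb s (N+1) (m+1) = gb s N (m+1) + s ^ (2*(N-m)) * gb s N m := by
  rcases eq_or_lt_of_le h with rfl | hlt
  · rw [gb_self s hne, gb_of_gt s (Nat.lt_succ_self m), gb_self s hne]
    simp
  · obtain ⟨d, rfl⟩ : ∃ d, N = m + d + 1 := ⟨N - m - 1, by omega⟩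
    have e1 : m + 1 ≤ m + d + 1 + 1 := by omega
    have e2 : m + 1 ≤ m + d + 1 := by omega
    simp only [gb, if_pos e1, if_pos e2, if_pos h]
    have r1 : m + d + 1 + 1 - (m + 1) = d + 1 := by omega
    have r2 : m + d + 1 - (m + 1) = d := by omega
    have r3 : m + d + 1 - m = d + 1 := by omega
    rw [r1, r2, r3]
    have h1 : PP s m ≠ 0 := PP_ne s hne m
    have h2 : PP s d ≠ 0 := PP_ne s hne d
    have h3 : (1:ℂ) - s^(2*m+2) ≠ 0 := by simpa using hne (2*m+1)
    have h4 : (1:ℂ) - s^(2*d+2) ≠ 0 := by simpa using hne (2*d+1)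
    rw [show m + d + 1 + 1 = (m + d + 1) + 1 from rfl, PP_succ s (m+d+1),
      PP_succ s d, PP_succ s m]
    rw [show 2 * (m + d + 1) + 2 = (2*m+2) + (2*d+2) by ring, pow_add]
    field_simp
    ring

lemma pascal2_s8 (s : ℂ) (hne : ∀ k : ℕ, (1 : ℂ) - s ^ (k+1) ≠ 0) {N m : ℕ} (h : m ≤ N) :
    gb s (N+1) (m+1) = s ^ (2*(m+1)) * gb s N (m+1) + gb s N m := by
  rcases eq_or_lt_of_le h with rfl | hlt
  · rw [gb_self s hne, gb_of_gt s (Nat.lt_succ_self m), gb_self s hne]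
    simp
  · obtain ⟨d, rfl⟩ : ∃ d, N = m + d + 1 := ⟨N - m - 1, by omega⟩
    have e1 : m + 1 ≤ m + d + 1 + 1 := by omega
    have e2 : m + 1 ≤ m + d + 1 := by omega
    simp only [gb, if_pos e1, if_pos e2, if_pos h]
    have r1 : m + d + 1 + 1 - (m + 1) = d + 1 := by omega
    have r2 : m + d + 1 - (m + 1) = d := by omega
    have r3 : m + d + 1 - m = d + 1 := by omega
    rw [r1, r2, r3]
    have h1 : PP s m ≠ 0 := PP_ne s hne m
    have h2 : PP s d ≠ 0 := PP_ne s hne d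
    have h3 : (1:ℂ) - s^(2*m+2) ≠ 0 := by simpa using hne (2*m+1)
    have h4 : (1:ℂ) - s^(2*d+2) ≠ 0 := by simpa using hne (2*d+1)
    rw [show m + d + 1 + 1 = (m + d + 1) + 1 from rfl, PP_succ s (m+d+1),
      PP_succ s d, PP_succ s m]
    rw [show 2 * (m + d + 1) + 2 = (2*(m+1)) + (2*d+2) by ring, pow_add]
    field_simp
    ring

lemma cc_zero (s : ℂ) (t : ℤ) : cc s 0 t = 1 := by simp [cc, c2]

lemma cc_succ (s : ℂ) (hs0 : s ≠ 0) (m : ℕ) (t : ℤ) :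
    cc s (m+1) t = -(s ^ (t + m)) * cc s m t := by
  simp only [cc, c2]
  rw [show c2 m + ↑m + t * ↑(m+1) = (c2 m + t * ↑m) + (t + ↑m) by push_cast; ring,
    zpow_add₀ hs0]
  ring

lemma mono_eq (s : ℂ) (hs0 : s ≠ 0) (a b c d e : ℤ) (i : ℕ) (h : a + b + c = d + e) :
    -(s^a) * ((-1:ℂ)^i * s^b) * s^c = -s^d * ((-1:ℂ)^i * s^e) := by
  have h1 : s^a * s^b * s^c = s^(a+b+c) := by
    rw [zpow_add₀ hs0, zpow_add₀ hs0]
  have h2 : s^d * s^e = s^(d+e) := (zpow_add₀ hs0 d e).symm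
  calc -(s^a) * ((-1:ℂ)^i * s^b) * s^c = -((-1:ℂ)^i) * (s^a * s^b * s^c) := by ring
    _ = -((-1:ℂ)^i) * s^(d+e) := by rw [h1, h]
    _ = -s^d * ((-1:ℂ)^i * s^e) := by rw [← h2]; ring

lemma Gs_succ1 (s : ℂ) (hs0 : s ≠ 0) (hne : ∀ k : ℕ, (1 : ℂ) - s ^ (k+1) ≠ 0)
    (N : ℕ) (t : ℤ) :
    Gs s (N+1) t = Gs s N t - s ^ (t + 2*N) * Gs s N (t - 1) := by
  have h0 : Gs s (N+1) t
      = (∑ i ∈ Finset.range (N+1), cc s (i+1) t * gb s (N+1) (i+1))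
        + cc s 0 t * gb s (N+1) 0 :=
    Finset.sum_range_succ' (fun m => cc s m t * gb s (N+1) m) (N+1)
  have h1 : ∀ i ∈ Finset.range (N+1),
      cc s (i+1) t * gb s (N+1) (i+1)
        = cc s (i+1) t * gb s N (i+1)
          + (-s^(t+2*(N:ℤ)) * cc s i (t-1)) * gb s N i := by
    intro i hi
    have hiN : i ≤ N := Nat.lt_succ_iff.mp (Finset.mem_range.mp hi)
    rw [pascal1_s8 s hne hiN, mul_add]
    congr 1
    rw [← mul_assoc]
    congr 1
    rw [cc_succ s hs0]
    have hcast : ((2*(N-i) : ℕ) : ℤ) = 2*(N:ℤ) - 2*i := by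
      push_cast [Nat.cast_sub hiN]; ring
    rw [← zpow_natCast s (2*(N-i)), hcast]
    simp only [cc]
    exact mono_eq s hs0 _ _ _ _ _ i (by ring)
  rw [h0, Finset.sum_congr rfl h1, Finset.sum_add_distrib]
  have h2 : (∑ i ∈ Finset.range (N+1), cc s (i+1) t * gb s N (i+1))
      + cc s 0 t * gb s N 0 = Gs s N t := by
    rw [← Finset.sum_range_succ' (fun m => cc s m t * gb s N m) (N+1)]
    show (∑ m ∈ Finset.range (N+1+1), cc s m t * gb s N m) = _
    rw [Finset.sum_range_succ, gb_of_gt s (Nat.lt_succ_self N)]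
    simp [Gs]
  have h3 : (∑ i ∈ Finset.range (N+1), (-s^(t+2*(N:ℤ)) * cc s i (t-1)) * gb s N i)
      = -s^(t+2*(N:ℤ)) * Gs s N (t-1) := by
    rw [Gs, Finset.mul_sum]
    exact Finset.sum_congr rfl (fun i _ => by ring)
  have h5 : cc s 0 t * gb s (N+1) 0 = 1 := by rw [cc_zero, gb_zero s hne, one_mul]
  have h4 : cc s 0 t * gb s N 0 = 1 := by rw [cc_zero, gb_zero s hne, one_mul]
  rw [h4] at h2
  rw [h3, h5]
  linear_combination h2

lemma Gs_succ2 (s : ℂ) (hs0 : s ≠ 0) (hne : ∀ k : ℕ, (1 : ℂ) - s ^ (k+1) ≠ 0)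
    (N : ℕ) (t : ℤ) :
    Gs s (N+1) t = Gs s N (t+2) - s ^ t * Gs s N (t+1) := by
  have h0 : Gs s (N+1) t
      = (∑ i ∈ Finset.range (N+1), cc s (i+1) t * gb s (N+1) (i+1))
        + cc s 0 t * gb s (N+1) 0 :=
    Finset.sum_range_succ' (fun m => cc s m t * gb s (N+1) m) (N+1)
  have h1 : ∀ i ∈ Finset.range (N+1),
      cc s (i+1) t * gb s (N+1) (i+1)
        = cc s (i+1) (t+2) * gb s N (i+1)
          + (-s^t * cc s i (t+1)) * gb s N i := by
    intro i hi
    have hiN : i ≤ N := Nat.lt_succ_iff.mp (Finset.mem_range.mp hi)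
    have key : cc s (i+1) t * s^((2*(i+1) : ℕ)) = cc s (i+1) (t+2) := by
      simp only [cc]
      rw [← zpow_natCast s (2*(i+1)), mul_assoc, ← zpow_add₀ hs0]
      congr 2
      push_cast; ring
    rw [pascal2_s8 s hne hiN, mul_add]
    congr 1
    · rw [← key]; ring
    · rw [cc_succ s hs0]
      congr 1
      simp only [cc]
      have h' := mono_eq s hs0 (t + i) (c2 i + t*i) 0 t (c2 i + (t+1)*i) i (by ring)
      rw [zpow_zero, mul_one] at h'
      rw [h']
  rw [h0, Finset.sum_congr rfl h1, Finset.sum_add_distrib]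
  have h2 : (∑ i ∈ Finset.range (N+1), cc s (i+1) (t+2) * gb s N (i+1))
      + cc s 0 (t+2) * gb s N 0 = Gs s N (t+2) := by
    rw [← Finset.sum_range_succ' (fun m => cc s m (t+2) * gb s N m) (N+1)]
    show (∑ m ∈ Finset.range (N+1+1), cc s m (t+2) * gb s N m) = _
    rw [Finset.sum_range_succ, gb_of_gt s (Nat.lt_succ_self N)]
    simp [Gs]
  have h3 : (∑ i ∈ Finset.range (N+1), (-s^t * cc s i (t+1)) * gb s N i)
      = -s^t * Gs s N (t+1) := by
    rw [Gs, Finset.mul_sum]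
    exact Finset.sum_congr rfl (fun i _ => by ring)
  have h5 : cc s 0 t * gb s (N+1) 0 = 1 := by rw [cc_zero, gb_zero s hne, one_mul]
  have h4 : cc s 0 (t+2) * gb s N 0 = 1 := by rw [cc_zero, gb_zero s hne, one_mul]
  rw [h4] at h2
  rw [h3, h5]
  linear_combination h2

lemma zz (s : ℂ) (hs0 : s ≠ 0) {a b c : ℤ} (h : a + b = c) : s^a * s^b = s^c := by
  rw [← zpow_add₀ hs0, h]

lemma O_succ (s : ℂ) (k : ℕ) :
    poch s (s^2) (k+1) = poch s (s^2) k * (1 - s^(2*k+1)) := by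
  simp only [poch, Finset.prod_range_succ]
  congr 1
  rw [← pow_mul]
  rw [show s * s ^ (2*k) = s^(2*k+1) by rw [pow_succ]; ring]

lemma c2_succ' (m : ℕ) : c2 (m+1) = c2 m + m := rfl

lemma ABC (s : ℂ) (hs0 : s ≠ 0) (hne : ∀ k : ℕ, (1 : ℂ) - s ^ (k+1) ≠ 0) (n : ℕ) :
    Gs s (2*n+1) (-(n:ℤ)) = 0 ∧
    Gs s (2*n+1) (1-(n:ℤ)) = s ^ (c2 (n+1)) * poch s (s^2) (n+1) ∧
    Gs s (2*n+1) (-(n:ℤ)-1)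
      = -(s ^ (c2 (n+1) - (2*(n:ℤ)+1)) * poch s (s^2) (n+1)) := by
  induction n with
  | zero =>
      have hG : ∀ t : ℤ, Gs s 1 t = 1 - s^t := by
        intro t
        rw [Gs, Finset.sum_range_succ, Finset.sum_range_succ, Finset.sum_range_zero,
          cc_zero, gb_zero s hne, gb_self s hne]
        simp only [cc, c2]
        push_cast
        ring
      have hO : poch s (s^2) 1 = 1 - s := by
        simp [poch]
      norm_num [hG, hO]
      refine ⟨?_, ?_⟩
      · simp [c2]
      · rw [show c2 1 = 0 from rfl, show (0:ℤ) - 1 = -1 by ring, zpow_neg, zpow_one]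
        field_simp
        ring
  | succ n ih =>
      obtain ⟨hA, hB, hC⟩ := ih
      set O := poch s (s^2) (n+1) with hOdef
      set T := c2 (n+1) with hTdef
      -- even-level intermediate values
      have hD : Gs s (2*n+1+1) (-(n:ℤ)-1) = s^T * O := by
        have h := Gs_succ2 s hs0 hne (2*n+1) (-(n:ℤ)-1)
        rw [show -(n:ℤ)-1+2 = 1-(n:ℤ) by ring, show -(n:ℤ)-1+1 = -(n:ℤ) by ring,
          hA, hB] at h
        rw [h]; ring
      have hE : Gs s (2*n+1+1) (-(n:ℤ)) = s^(T+(n:ℤ)+1) * O := by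
        have h := Gs_succ1 s hs0 hne (2*n+1) (-(n:ℤ))
        rw [hA, hC] at h
        rw [h, zero_sub]
        have e1 : s^(-(n:ℤ) + 2*((2*n+1 : ℕ) : ℤ)) * s^(T - (2*(n:ℤ)+1))
            = s^(T+(n:ℤ)+1) := zz s hs0 (by push_cast; ring)
        linear_combination O * e1
      have hF : Gs s (2*n+1+1) (-(n:ℤ)-2) = s^(T-3*(n:ℤ)-3) * O := by
        have h := Gs_succ2 s hs0 hne (2*n+1) (-(n:ℤ)-2)
        rw [show -(n:ℤ)-2+2 = -(n:ℤ) by ring, show -(n:ℤ)-2+1 = -(n:ℤ)-1 by ring,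
          hA, hC] at h
        rw [h, zero_sub]
        have e1 : s^(-(n:ℤ)-2) * s^(T - (2*(n:ℤ)+1)) = s^(T-3*(n:ℤ)-3) :=
          zz s hs0 (by ring)
        linear_combination O * e1
      refine ⟨?_, ?_, ?_⟩
      · -- A at n+1
        rw [show 2*(n+1)+1 = (2*n+1+1)+1 by ring, show (-((n:ℕ)+1:ℕ) : ℤ) = -(n:ℤ)-1 by push_cast; ring]
        have h := Gs_succ1 s hs0 hne (2*n+1+1) (-(n:ℤ)-1)
        rw [show -(n:ℤ)-1-1 = -(n:ℤ)-2 by ring, hD, hF] at h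
        rw [h]
        have e1 : s^(-(n:ℤ)-1 + 2*((2*n+1+1 : ℕ) : ℤ)) * s^(T-3*(n:ℤ)-3) = s^T :=
          zz s hs0 (by push_cast; ring)
        linear_combination (-O) * e1
      · -- B at n+1
        rw [show 2*(n+1)+1 = (2*n+1+1)+1 by ring,
          show (1 - ((n:ℕ)+1:ℕ) : ℤ) = -(n:ℤ) by push_cast; ring,
          show (n:ℕ)+1+1 = (n+1)+1 from rfl, c2_succ' (n+1), O_succ s (n+1)]
        have h := Gs_succ1 s hs0 hne (2*n+1+1) (-(n:ℤ))
        rw [hE, hD] at h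
        rw [h, ← zpow_natCast s (2*(n+1)+1)]
        have e1 : s^(-(n:ℤ) + 2*((2*n+1+1 : ℕ) : ℤ)) * s^T = s^(T+3*(n:ℤ)+4) :=
          zz s hs0 (by push_cast; ring)
        have e2 : s^(T+(n:ℤ)+1) * s^(((2*(n+1)+1 : ℕ)) : ℤ) = s^(T+3*(n:ℤ)+4) :=
          zz s hs0 (by push_cast; ring)
        have e3 : s^(T + ((n+1 : ℕ) : ℤ)) = s^(T+(n:ℤ)+1) := by
          congr 1; push_cast; ring
        rw [e3]
        linear_combination (-O) * e1 + O * e2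
      · -- C at n+1
        rw [show 2*(n+1)+1 = (2*n+1+1)+1 by ring,
          show (-((n:ℕ)+1:ℕ) - 1 : ℤ) = -(n:ℤ)-2 by push_cast; ring,
          show (n:ℕ)+1+1 = (n+1)+1 from rfl, c2_succ' (n+1), O_succ s (n+1)]
        have h := Gs_succ2 s hs0 hne (2*n+1+1) (-(n:ℤ)-2)
        rw [show -(n:ℤ)-2+2 = -(n:ℤ) by ring, show -(n:ℤ)-2+1 = -(n:ℤ)-1 by ring,
          hE, hD] at h
        rw [h, ← zpow_natCast s (2*(n+1)+1)]
        have e0 : s^(T + ((n+1:ℕ):ℤ) - (2*((n:ℕ)+1:ℕ) + 1 : ℤ)) = s^(T-(n:ℤ)-2) := by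
          congr 1; push_cast; ring
        have e1 : s^(-(n:ℤ)-2) * s^T = s^(T-(n:ℤ)-2) := zz s hs0 (by ring)
        have e2 : s^(T-(n:ℤ)-2) * s^(((2*(n+1)+1 : ℕ)) : ℤ) = s^(T+(n:ℤ)+1) :=
          zz s hs0 (by push_cast; ring)
        rw [e0]
        linear_combination (-O) * e1 - O * e2

lemma Gtarget (s : ℂ) (hs0 : s ≠ 0) (hne : ∀ k : ℕ, (1 : ℂ) - s ^ (k+1) ≠ 0) (n : ℕ) :
    Gs s (2*n+1) (2-(n:ℤ))
      = s ^ (c2 (n+1) - (n:ℤ)) * ((1 + s^(2*n+1)) * poch s (s^2) (n+1)) := by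
  obtain ⟨hA, hB, hC⟩ := ABC s hs0 hne n
  have hE : Gs s (2*n+1+1) (-(n:ℤ)) = s^(c2 (n+1)+(n:ℤ)+1) * poch s (s^2) (n+1) := by
    have h := Gs_succ1 s hs0 hne (2*n+1) (-(n:ℤ))
    rw [hA, hC] at h
    rw [h, zero_sub]
    have e1 : s^(-(n:ℤ) + 2*((2*n+1 : ℕ) : ℤ)) * s^(c2 (n+1) - (2*(n:ℤ)+1))
        = s^(c2 (n+1)+(n:ℤ)+1) := zz s hs0 (by push_cast; ring)
    linear_combination (poch s (s^2) (n+1)) * e1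
  have h := Gs_succ2 s hs0 hne (2*n+1) (-(n:ℤ))
  rw [show -(n:ℤ)+2 = 2-(n:ℤ) by ring, show -(n:ℤ)+1 = 1-(n:ℤ) by ring, hB, hE] at h
  -- h : s^(T+n+1) * O = Gs (2n+1) (2-n) - s^(-n) * (s^T * O)
  have e1 : s^(-(n:ℤ)) * s^(c2 (n+1)) = s^(c2 (n+1) - (n:ℤ)) := zz s hs0 (by ring)
  have e2 : s^(c2 (n+1) - (n:ℤ)) * s^(((2*n+1 : ℕ)) : ℤ) = s^(c2 (n+1)+(n:ℤ)+1) :=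
    zz s hs0 (by push_cast; ring)
  rw [← zpow_natCast s (2*n+1)]
  linear_combination -h + (poch s (s^2) (n+1)) * e1 - (poch s (s^2) (n+1)) * e2

lemma pochq2 (s : ℂ) (M : ℕ) :
    PP s (M+1) = (1 - s^2) * poch ((s^2)^2) (s^2) M := by
  simp only [PP, poch]
  rw [Finset.prod_range_succ', mul_comm]
  congr 1
  · norm_num
  · exact Finset.prod_congr rfl (fun k _ => by ring_nf)

/-- A Bailey pair relative to `q` involving half-integer powers of `q`:
`s` is a fixed square root of `q`, so that `q^{1/2} = s`, `q^{n²/2-n} = s^{n²-2n}`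
and `q^{(r²-3r)/4} = s^{(r²-3r)/2}`. -/
theorem slater_bailey_pair_half (q s : ℂ) (hq : ‖q‖ < 1)
    (hs : s ^ 2 = q) (hs0 : s ≠ 0) (n : ℕ) :
    (-1 : ℂ) ^ n * s ^ ((n : ℤ) ^ 2 - 2 * (n : ℤ)) * poch s q n / poch q q (2 * n) =
      ∑ r ∈ Finset.range (n + 1),
        ((-1 : ℂ) ^ r * s ^ (((r : ℤ) ^ 2 - 3 * (r : ℤ)) / 2) *
            (1 - q ^ (2 * r + 1)) / (1 - q)) /
          (poch q q (n - r) * poch (q ^ 2) q (n + r)) := by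
  subst hs
  have hs1 : ‖s‖ < 1 := by
    have h2 : ‖s‖ ^ 2 < 1 := by rw [← norm_pow]; exact hq
    nlinarith [norm_nonneg s]
  have hne : ∀ k : ℕ, (1 : ℂ) - s ^ (k+1) ≠ 0 := by
    intro k h
    have h1 : s ^ (k+1) = 1 := by linear_combination -h
    have h2 := congrArg (fun z : ℂ => ‖z‖) h1
    simp only [norm_pow, norm_one] at h2
    have hlt : ‖s‖ ^ (k+1) < 1 :=
      pow_lt_one₀ (norm_nonneg s) hs1 (Nat.succ_ne_zero k)
    rw [h2] at hlt; exact lt_irrefl 1 hlt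
  have hP := PP_ne s hne
  set W : ℂ := (-1:ℂ)^n * s^(c2 n - (n:ℤ)) with hW
  set u : ℕ → ℂ :=
    fun m => W * (cc s m (2-(n:ℤ)) * gb s (2*n+1) m) / PP s (2*n+1) with hu
  have hterm : ∀ r ∈ Finset.range (n + 1),
      ((-1 : ℂ) ^ r * s ^ (((r : ℤ) ^ 2 - 3 * (r : ℤ)) / 2) *
            (1 - (s^2) ^ (2 * r + 1)) / (1 - s^2)) /
          (poch (s^2) (s^2) (n - r) * poch ((s^2) ^ 2) (s^2) (n + r))
        = u (n-r) + u (n+1+r) := by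
    intro r hr
    have hrn : r ≤ n := Nat.lt_succ_iff.mp (Finset.mem_range.mp hr)
    have hd1 := c2_double n
    have hd2 := c2_double r
    have hd3 := c2_double (n-r)
    have hd4 := c2_double (n+1+r)
    have hcast : ((n-r : ℕ) : ℤ) = (n:ℤ) - r := by
      rw [Nat.cast_sub hrn]
    rw [hcast] at hd3
    -- exponent normalizations
    have f1 : ((r:ℤ)^2 - 3*(r:ℤ))/2 = c2 r - r := by
      rw [show (r:ℤ)^2 - 3*(r:ℤ) = 2*(c2 r - r) by linear_combination -hd2]
      exact Int.mul_ediv_cancel_left _ (by norm_num)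
    have f2 : (1:ℂ) - (s^2)^(2*r+1) = 1 - s^(4*r+2) := by
      rw [← pow_mul, show 2*(2*r+1) = 4*r+2 by ring]
    have f3 : (1 - s^2) * poch ((s^2)^2) (s^2) (n+r) = PP s (n+r+1) :=
      (pochq2 s (n+r)).symm
    have f4 : gb s (2*n+1) (n-r) = PP s (2*n+1) / (PP s (n-r) * PP s (n+r+1)) := by
      rw [gb, if_pos (by omega), show 2*n+1 - (n-r) = n+r+1 by omega]
    have f5 : gb s (2*n+1) (n+1+r) = PP s (2*n+1) / (PP s (n+r+1) * PP s (n-r)) := by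
      rw [gb, if_pos (by omega), show 2*n+1 - (n+1+r) = n-r by omega,
        show n+1+r = n+r+1 by omega]
    have hsign1 : (-1:ℂ)^n * (-1:ℂ)^(n-r) = (-1)^r := by
      rw [← pow_add, show n + (n-r) = 2*(n-r) + r by omega, pow_add, pow_mul]
      norm_num
    have hsign2 : (-1:ℂ)^n * (-1:ℂ)^(n+1+r) = -(-1:ℂ)^r := by
      rw [← pow_add, show n + (n+1+r) = 2*n + (r+1) by omega, pow_add, pow_mul]
      norm_num
      ring
    have hexp1 : (c2 n - (n:ℤ)) + (c2 (n-r) + (2-(n:ℤ)) * ((n-r : ℕ) : ℤ))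
        = c2 r - r := by
      rw [hcast]
      apply mul_left_cancel₀ (a := (2:ℤ)) two_ne_zero
      linear_combination hd1 + hd3 - hd2
    have hexp2 : (c2 n - (n:ℤ)) + (c2 (n+1+r) + (2-(n:ℤ)) * ((n+1+r : ℕ) : ℤ))
        = c2 r + 3*r + 2 := by
      apply mul_left_cancel₀ (a := (2:ℤ)) two_ne_zero
      push_cast
      push_cast at hd4
      linear_combination hd1 + hd4 - hd2
    have f6 : W * cc s (n-r) (2-(n:ℤ)) = (-1:ℂ)^r * s^(c2 r - (r:ℤ)) := by
      simp only [cc, hW]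
      calc (-1:ℂ)^n * s^(c2 n - (n:ℤ)) *
            ((-1:ℂ)^(n-r) * s^(c2 (n-r) + (2-(n:ℤ)) * ((n-r : ℕ) : ℤ)))
          = ((-1:ℂ)^n * (-1:ℂ)^(n-r)) *
            (s^(c2 n - (n:ℤ)) * s^(c2 (n-r) + (2-(n:ℤ)) * ((n-r : ℕ) : ℤ))) := by
            ring
        _ = (-1:ℂ)^r * s^(c2 r - (r:ℤ)) := by
            rw [hsign1, zz s hs0 hexp1]
    have f7 : W * cc s (n+1+r) (2-(n:ℤ)) = -((-1:ℂ)^r * s^(c2 r + 3*(r:ℤ) + 2)) := by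
      simp only [cc, hW]
      calc (-1:ℂ)^n * s^(c2 n - (n:ℤ)) *
            ((-1:ℂ)^(n+1+r) * s^(c2 (n+1+r) + (2-(n:ℤ)) * ((n+1+r : ℕ) : ℤ)))
          = ((-1:ℂ)^n * (-1:ℂ)^(n+1+r)) *
            (s^(c2 n - (n:ℤ)) * s^(c2 (n+1+r) + (2-(n:ℤ)) * ((n+1+r : ℕ) : ℤ))) := by
            ring
        _ = -((-1:ℂ)^r * s^(c2 r + 3*(r:ℤ) + 2)) := by
            rw [hsign2, zz s hs0 hexp2]; ring
    have hnum : (-1:ℂ)^r * s^(c2 r - (r:ℤ)) * (1 - s^(4*r+2))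
        = W * cc s (n-r) (2-(n:ℤ)) + W * cc s (n+1+r) (2-(n:ℤ)) := by
      rw [f6, f7]
      have e := zz s hs0 (show (c2 r - (r:ℤ)) + ((4*r+2 : ℕ) : ℤ)
        = c2 r + 3*(r:ℤ) + 2 by push_cast; ring)
      rw [← zpow_natCast s (4*r+2)]
      linear_combination (-(-1:ℂ)^r) * e
    have h1 : PP s (n-r) ≠ 0 := hP (n-r)
    have h2 : PP s (n+r+1) ≠ 0 := hP (n+r+1)
    have h3 : PP s (2*n+1) ≠ 0 := hP (2*n+1)
    rw [f1, f2]
    rw [show poch (s^2) (s^2) (n-r) = PP s (n-r) from rfl]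
    rw [div_div, mul_left_comm (1 - s^2), f3]
    simp only [hu]
    rw [f4, f5]
    have hred : ∀ (c X Y : ℂ), X ≠ 0 → Y ≠ 0 →
        W * (c * (PP s (2*n+1)/(X*Y)))/PP s (2*n+1) = W*c/(X*Y) := by
      intro c X Y hX hY
      field_simp
    rw [hred _ _ _ h1 h2, hred _ _ _ h2 h1,
      mul_comm (PP s (n+r+1)) (PP s (n-r)), ← add_div, hnum]
  rw [Finset.sum_congr rfl hterm, Finset.sum_add_distrib]
  have h1 : (∑ r ∈ Finset.range (n+1), u (n-r)) = ∑ r ∈ Finset.range (n+1), u r := by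
    have := Finset.sum_range_reflect u (n+1)
    simpa using this
  have h2 : (∑ m ∈ Finset.range (2*n+2), u m)
      = (∑ m ∈ Finset.range (n+1), u m) + ∑ r ∈ Finset.range (n+1), u (n+1+r) := by
    rw [show 2*n+2 = (n+1)+(n+1) by ring]
    exact Finset.sum_range_add u (n+1) (n+1)
  rw [h1, ← h2]
  have h3 : (∑ m ∈ Finset.range (2*n+2), u m)
      = W * Gs s (2*n+1) (2-(n:ℤ)) / PP s (2*n+1) := by
    rw [Gs, show 2*n+1+1 = 2*n+2 by ring, Finset.mul_sum, Finset.sum_div]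
  rw [h3, Gtarget s hs0 hne n]
  -- final algebra
  have hO : poch s (s^2) (n+1) = poch s (s^2) n * (1 - s^(2*n+1)) := O_succ s n
  have hPP : PP s (2*n+1) = PP s (2*n) * (1 - s^(4*n+2)) := by
    rw [show 2*n+1 = (2*n)+1 by ring, PP_succ, show 2*(2*n)+2 = 4*n+2 by ring]
  have hsq : (1 + s^(2*n+1)) * (1 - s^(2*n+1)) = 1 - s^(4*n+2) := by
    rw [show 4*n+2 = (2*n+1)+(2*n+1) by ring, pow_add]; ring
  have hx : (1:ℂ) - s^(4*n+2) ≠ 0 := by simpa using hne (4*n+1)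
  have hP2n : PP s (2*n) ≠ 0 := hP (2*n)
  have e : s^(c2 n - (n:ℤ)) * s^(c2 (n+1) - (n:ℤ)) = s^((n:ℤ)^2 - 2*(n:ℤ)) := by
    apply zz s hs0
    apply mul_left_cancel₀ (a := (2:ℤ)) two_ne_zero
    have hd1 := c2_double n
    have hd5 := c2_double (n+1)
    push_cast at hd5
    linear_combination hd1 + hd5
  have hnum2 : (-1:ℂ)^n * s^(c2 n - (n:ℤ)) *
      (s^(c2 (n+1) - (n:ℤ)) * ((1 + s^(2*n+1)) * (poch s (s^2) n * (1 - s^(2*n+1)))))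
      = ((-1:ℂ)^n * s^((n:ℤ)^2 - 2*(n:ℤ)) * poch s (s^2) n) * (1 - s^(4*n+2)) := by
    linear_combination
      ((-1:ℂ)^n * poch s (s^2) n * ((1+s^(2*n+1))*(1-s^(2*n+1)))) * e
      + ((-1:ℂ)^n * s^((n:ℤ)^2 - 2*(n:ℤ)) * poch s (s^2) n) * hsq
  show (-1:ℂ)^n * s^((n:ℤ)^2 - 2*(n:ℤ)) * poch s (s^2) n / PP s (2*n) = _
  rw [hO, hPP, hW]
  rw [div_eq_div_iff hP2n (mul_ne_zero hP2n hx)]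
  linear_combination (PP s (2*n)) * hnum2
    + ((-2:ℂ) * (-1:ℂ)^n * poch s (s^2) n * PP s (2*n) * (1 - s^(4*n+2))) * e
end

section
/- Σ_{n≥0} Σ_{0≤j<n/3} (-1)^{n+j} z^{n-3j} q^{(n^2-3j^2)/2+(n-j)/2} = Σ_{n≥0} Σ_{n/3<j≤n/2} (-1)^{n+j} z^{-n+3j} q^{(n^2-3j^2)/2+(n-j)/2}, as an identity of formal power series in q with coefficients Laurent polynomials in z (or for |q|<1 and fixed z≠0). -/
open scoped BigOperators

namespace GarvanAux

/-- Natural-number version of the quadratic exponent `(n² - 3j² + n - j)/2`. -/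
def e (n j : ℕ) : ℕ := (n * n + n - (3 * (j * j) + j)) / 2

lemma even_sq_add (n : ℕ) : 2 ∣ n * n + n := by
  have h := Nat.even_mul_succ_self n
  rw [Nat.mul_succ] at h
  exact h.two_dvd

lemma e_cast {n j : ℕ} (h2 : 2 * j ≤ n) :
    ((n : ℤ) ^ 2 - 3 * (j : ℤ) ^ 2 + (n : ℤ) - (j : ℤ)) / 2 = (e n j : ℤ) := by
  have h4 : 4 * (j * j) ≤ n * n := by
    calc 4 * (j * j) = (2 * j) * (2 * j) := by ring
    _ ≤ n * n := Nat.mul_le_mul h2 h2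
  have hd1 : 2 ∣ n * n + n := even_sq_add n
  have hd2 : 2 ∣ j * j + j := even_sq_add j
  have hsq1 : (n : ℤ) ^ 2 = ((n * n : ℕ) : ℤ) := by push_cast; ring
  have hsq2 : (j : ℤ) ^ 2 = ((j * j : ℕ) : ℤ) := by push_cast; ring
  rw [hsq1, hsq2]
  unfold e
  set a := n * n with ha
  set b := j * j with hb
  omega

lemma e_lb {n j : ℕ} (h2 : 2 * j ≤ n) : n * n / 8 ≤ e n j := by
  have h4 : 4 * (j * j) ≤ n * n := by
    calc 4 * (j * j) = (2 * j) * (2 * j) := by ring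
    _ ≤ n * n := Nat.mul_le_mul h2 h2
  have hd1 : 2 ∣ n * n + n := even_sq_add n
  have hd2 : 2 ∣ j * j + j := even_sq_add j
  unfold e
  set a := n * n with ha
  set b := j * j with hb
  omega

lemma e_pos {n j : ℕ} (h2 : 2 * j ≤ n) (hw : n ≠ 3 * j) : 0 < e n j := by
  have hd1 : 2 ∣ n * n + n := even_sq_add n
  have hd2 : 2 ∣ j * j + j := even_sq_add j
  rcases lt_or_gt_of_ne hw with h | h
  · have h4 : 4 * (j * j) ≤ n * n := by
      calc 4 * (j * j) = (2 * j) * (2 * j) := by ring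
      _ ≤ n * n := Nat.mul_le_mul h2 h2
    have hj1 : 1 * 1 ≤ j * j := Nat.mul_le_mul (by omega) (by omega)
    unfold e
    set a := n * n with ha
    set b := j * j with hb
    omega
  · have h5 : (3 * j + 1) * (3 * j + 1) ≤ n * n := Nat.mul_le_mul (by omega) (by omega)
    have h6 : 9 * (j * j) + 6 * j + 1 ≤ n * n := by
      calc 9 * (j * j) + 6 * j + 1 = (3 * j + 1) * (3 * j + 1) := by ring
      _ ≤ n * n := h5
    unfold e
    set a := n * n with ha
    set b := j * j with hb
    omega

noncomputable def fA (q z : ℂ) (p : ℕ × ℕ) : ℂ :=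
  if 3 * p.2 < p.1 then (-1) ^ (p.1 + p.2) * z ^ (p.1 - 3 * p.2) * q ^ (e p.1 p.2) else 0

noncomputable def fB (q z : ℂ) (p : ℕ × ℕ) : ℂ :=
  if p.1 < 3 * p.2 ∧ 2 * p.2 ≤ p.1 then
    (-1) ^ (p.1 + p.2) * z ^ (3 * p.2 - p.1) * q ^ (e p.1 p.2) else 0

lemma negpow (a b : ℕ) (h : a % 2 = b % 2) : (-1 : ℂ) ^ a = (-1 : ℂ) ^ b := by
  rw [← Nat.div_add_mod a 2, ← Nat.div_add_mod b 2, h, pow_add, pow_add, pow_mul, pow_mul]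
  norm_num

lemma e_sym {n j : ℕ} (h1 : n < 3 * j) (h2 : 2 * j ≤ n) :
    e (2 * n - 3 * j) (n - 2 * j) = e n j := by
  have h3 : 2 * (n - 2 * j) ≤ 2 * n - 3 * j := by omega
  have hA := e_cast (n := 2 * n - 3 * j) (j := n - 2 * j) h3
  have hB := e_cast (n := n) (j := j) h2
  have c1 : ((2 * n - 3 * j : ℕ) : ℤ) = 2 * (n : ℤ) - 3 * (j : ℤ) := by omega
  have c2 : ((n - 2 * j : ℕ) : ℤ) = (n : ℤ) - 2 * (j : ℤ) := by omega
  have hZ : ((e (2 * n - 3 * j) (n - 2 * j) : ℕ) : ℤ) = ((e n j : ℕ) : ℤ) := by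
    rw [← hA, ← hB, c1, c2]
    have hnum : (2 * (n : ℤ) - 3 * (j : ℤ)) ^ 2 - 3 * ((n : ℤ) - 2 * (j : ℤ)) ^ 2
        + (2 * (n : ℤ) - 3 * (j : ℤ)) - ((n : ℤ) - 2 * (j : ℤ))
        = (n : ℤ) ^ 2 - 3 * (j : ℤ) ^ 2 + (n : ℤ) - (j : ℤ) := by ring
    rw [hnum]
  exact_mod_cast hZ

lemma key (q z : ℂ) {n j : ℕ} (h1 : n < 3 * j) (h2 : 2 * j ≤ n) :
    fB q z (n, j) = fA q z (2 * n - 3 * j, n - 2 * j) := by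
  have hc : 3 * (n - 2 * j) < 2 * n - 3 * j := by omega
  simp only [fA, fB]
  rw [if_pos (⟨h1, h2⟩ : n < 3 * j ∧ 2 * j ≤ n), if_pos hc]
  have hsign : (-1 : ℂ) ^ (2 * n - 3 * j + (n - 2 * j)) = (-1 : ℂ) ^ (n + j) :=
    negpow _ _ (by omega)
  have hzexp : 2 * n - 3 * j - 3 * (n - 2 * j) = 3 * j - n := by omega
  have hqexp : e (2 * n - 3 * j) (n - 2 * j) = e n j := e_sym h1 h2
  rw [hsign, hzexp, hqexp]

lemma mem_support_fB {q z : ℂ} {p : ℕ × ℕ} (h : fB q z p ≠ 0) :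
    p.1 < 3 * p.2 ∧ 2 * p.2 ≤ p.1 := by
  by_contra hc
  exact h (by simp only [fB, if_neg hc])

lemma mem_support_fA {q z : ℂ} {p : ℕ × ℕ} (h : fA q z p ≠ 0) : 3 * p.2 < p.1 := by
  by_contra hc
  exact h (by simp only [fA, if_neg hc])

/-- The wedge-swapping involution `(n, j) ↦ (2n - 3j, n - 2j)` turns the sum over the
first wedge into the sum over the second wedge. -/
lemma tsum_fA_eq_fB (q z : ℂ) : ∑' p : ℕ × ℕ, fA q z p = ∑' p : ℕ × ℕ, fB q z p := by
  apply tsum_eq_tsum_of_ne_zero_bij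
    (i := fun x => (2 * x.1.1 - 3 * x.1.2, x.1.1 - 2 * x.1.2))
  · rintro ⟨⟨n, j⟩, hx⟩ ⟨⟨m, k⟩, hy⟩ hxy
    have h1 := mem_support_fB hx
    have h2 := mem_support_fB hy
    simp only at h1 h2
    simp only [Prod.mk.injEq] at hxy
    simp only [Subtype.mk.injEq, Prod.mk.injEq]
    omega
  · rintro ⟨n, j⟩ hp
    have hA : 3 * j < n := mem_support_fA hp
    have hBne : fB q z (2 * n - 3 * j, n - 2 * j) ≠ 0 := by
      have hk := key q z (n := 2 * n - 3 * j) (j := n - 2 * j) (by omega) (by omega)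
      have heq : (2 * (2 * n - 3 * j) - 3 * (n - 2 * j), (2 * n - 3 * j) - 2 * (n - 2 * j))
          = (n, j) := by
        simp only [Prod.mk.injEq]; omega
      rw [hk, heq]
      exact hp
    refine ⟨⟨(2 * n - 3 * j, n - 2 * j), hBne⟩, ?_⟩
    simp only [Prod.mk.injEq]
    omega
  · rintro ⟨⟨n, j⟩, hx⟩
    have h1 := mem_support_fB hx
    simp only at h1
    exact (key q z h1.1 h1.2).symm

lemma sliceA (q z : ℂ) (n : ℕ) :
    ∑' j : ℕ, fA q z (n, j) = ∑ j ∈ (Finset.range n).filter (fun j => 3 * j < n),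
      (-1 : ℂ) ^ (n + j) * z ^ ((n : ℤ) - 3 * (j : ℤ)) *
        q ^ (((n : ℤ) ^ 2 - 3 * (j : ℤ) ^ 2 + (n : ℤ) - (j : ℤ)) / 2) := by
  rw [tsum_eq_sum (s := (Finset.range n).filter (fun j => 3 * j < n)) ?_]
  · refine Finset.sum_congr rfl fun j hj => ?_
    simp only [Finset.mem_filter, Finset.mem_range] at hj
    have h3 : 3 * j < n := hj.2
    simp only [fA]
    rw [if_pos (show 3 * (n, j).2 < (n, j).1 from h3)]
    have hz' : z ^ (n - 3 * j : ℕ) = z ^ ((n : ℤ) - 3 * (j : ℤ)) := by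
      rw [← zpow_natCast]
      congr 1
      omega
    have hq' : q ^ (e n j) = q ^ (((n : ℤ) ^ 2 - 3 * (j : ℤ) ^ 2 + (n : ℤ) - (j : ℤ)) / 2) := by
      rw [e_cast (by omega), zpow_natCast]
    rw [hz', hq']
  · intro j hj
    simp only [Finset.mem_filter, Finset.mem_range] at hj
    simp only [fA]
    rw [if_neg]
    intro h3
    exact hj ⟨by omega, h3⟩

lemma sliceB (q z : ℂ) (n : ℕ) :
    ∑' j : ℕ, fB q z (n, j) = ∑ j ∈ (Finset.range (n / 2 + 1)).filter (fun j => n < 3 * j),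
      (-1 : ℂ) ^ (n + j) * z ^ (3 * (j : ℤ) - (n : ℤ)) *
        q ^ (((n : ℤ) ^ 2 - 3 * (j : ℤ) ^ 2 + (n : ℤ) - (j : ℤ)) / 2) := by
  rw [tsum_eq_sum (s := (Finset.range (n / 2 + 1)).filter (fun j => n < 3 * j)) ?_]
  · refine Finset.sum_congr rfl fun j hj => ?_
    simp only [Finset.mem_filter, Finset.mem_range] at hj
    have h1 : n < 3 * j := hj.2
    have h2 : 2 * j ≤ n := by omega
    simp only [fB]
    rw [if_pos (show (n, j).1 < 3 * (n, j).2 ∧ 2 * (n, j).2 ≤ (n, j).1 from ⟨h1, h2⟩)]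
    have hz' : z ^ (3 * j - n : ℕ) = z ^ (3 * (j : ℤ) - (n : ℤ)) := by
      rw [← zpow_natCast]
      congr 1
      omega
    have hq' : q ^ (e n j) = q ^ (((n : ℤ) ^ 2 - 3 * (j : ℤ) ^ 2 + (n : ℤ) - (j : ℤ)) / 2) := by
      rw [e_cast h2, zpow_natCast]
    rw [hz', hq']
  · intro j hj
    simp only [Finset.mem_filter, Finset.mem_range] at hj
    simp only [fB]
    rw [if_neg]
    rintro ⟨h1, h2⟩
    exact hj ⟨by omega, h1⟩

noncomputable def bound (q z : ℂ) (p : ℕ × ℕ) : ℝ :=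
  if p.2 ≤ p.1 then (max 1 ‖z‖) ^ p.1 * ‖q‖ ^ (p.1 * p.1 / 8) else 0

lemma norm_fA_le (q z : ℂ) (hq1 : ‖q‖ ≤ 1) (p : ℕ × ℕ) : ‖fA q z p‖ ≤ bound q z p := by
  obtain ⟨n, j⟩ := p
  simp only [fA, bound]
  split_ifs with h1 h2
  · rw [norm_mul, norm_mul, norm_pow, norm_pow, norm_pow, norm_neg, norm_one, one_pow, one_mul]
    have hz : ‖z‖ ^ (n - 3 * j) ≤ (max 1 ‖z‖) ^ n := by
      calc ‖z‖ ^ (n - 3 * j) ≤ (max 1 ‖z‖) ^ (n - 3 * j) :=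
            pow_le_pow_left₀ (norm_nonneg z) (le_max_right _ _) _
      _ ≤ (max 1 ‖z‖) ^ n := pow_le_pow_right₀ (le_max_left _ _) (by omega)
    have hq : ‖q‖ ^ (e n j) ≤ ‖q‖ ^ (n * n / 8) :=
      pow_le_pow_of_le_one (norm_nonneg q) hq1 (e_lb (by omega))
    exact mul_le_mul hz hq (by positivity) (by positivity)
  · exact absurd (by omega : j ≤ n) h2
  · simp
  · simp

lemma norm_fB_le (q z : ℂ) (hq1 : ‖q‖ ≤ 1) (p : ℕ × ℕ) : ‖fB q z p‖ ≤ bound q z p := by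
  obtain ⟨n, j⟩ := p
  simp only [fB, bound]
  split_ifs with h1 h2
  · rw [norm_mul, norm_mul, norm_pow, norm_pow, norm_pow, norm_neg, norm_one, one_pow, one_mul]
    have hz : ‖z‖ ^ (3 * j - n) ≤ (max 1 ‖z‖) ^ n := by
      calc ‖z‖ ^ (3 * j - n) ≤ (max 1 ‖z‖) ^ (3 * j - n) :=
            pow_le_pow_left₀ (norm_nonneg z) (le_max_right _ _) _
      _ ≤ (max 1 ‖z‖) ^ n := pow_le_pow_right₀ (le_max_left _ _) (by omega)
    have hq : ‖q‖ ^ (e n j) ≤ ‖q‖ ^ (n * n / 8) :=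
      pow_le_pow_of_le_one (norm_nonneg q) hq1 (e_lb h1.2)
    exact mul_le_mul hz hq (by positivity) (by positivity)
  · exact absurd (by omega : j ≤ n) h2
  · simp
  · simp

lemma summable_aux {r M : ℝ} (hr0 : 0 < r) (hr1 : r < 1) (hM : 1 ≤ M) :
    Summable (fun p : ℕ × ℕ => if p.2 ≤ p.1 then M ^ p.1 * r ^ (p.1 * p.1 / 8) else 0) := by
  obtain ⟨K, hK⟩ : ∃ K, M * r ^ K < 1 := by
    obtain ⟨K, hK⟩ := exists_pow_lt_of_lt_one (x := M⁻¹) (by positivity) hr1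
    refine ⟨K, ?_⟩
    have hM0 : 0 < M := by linarith
    calc M * r ^ K < M * M⁻¹ := mul_lt_mul_of_pos_left hK hM0
    _ = 1 := mul_inv_cancel₀ hM0.ne'
  set x := M * r ^ K with hx
  have hx0 : 0 ≤ x := by positivity
  have hrK : 0 < r ^ K := by positivity
  set C := ((r ^ K)⁻¹) ^ (8 * K) with hC
  have hinv1 : 1 ≤ (r ^ K)⁻¹ := (one_le_inv₀ hrK).mpr (pow_le_one₀ hr0.le hr1.le)
  have hC1 : 1 ≤ C := one_le_pow₀ hinv1
  have key : ∀ n : ℕ, M ^ n * r ^ (n * n / 8) ≤ C * x ^ n := by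
    intro n
    by_cases hn : K * n ≤ n * n / 8
    · have h1 : r ^ (n * n / 8) ≤ r ^ (K * n) := pow_le_pow_of_le_one hr0.le hr1.le hn
      calc M ^ n * r ^ (n * n / 8) ≤ M ^ n * r ^ (K * n) :=
            mul_le_mul_of_nonneg_left h1 (by positivity)
      _ = x ^ n := by rw [hx, mul_pow, ← pow_mul]
      _ ≤ C * x ^ n := le_mul_of_one_le_left (by positivity) hC1
    · have hn8 : n ≤ 8 * K := by
        by_contra hcon
        push_neg at hcon
        apply hn
        rw [Nat.le_div_iff_mul_le (by norm_num)]
        calc K * n * 8 = (8 * K) * n := by ring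
        _ ≤ n * n := Nat.mul_le_mul_right n (by omega)
      have hM' : M ^ n = x ^ n * ((r ^ K)⁻¹) ^ n := by
        rw [← mul_pow]
        congr 1
        field_simp [hx]
        exact hx.symm
      calc M ^ n * r ^ (n * n / 8) ≤ M ^ n * 1 :=
            mul_le_mul_of_nonneg_left (pow_le_one₀ hr0.le hr1.le) (by positivity)
      _ = x ^ n * ((r ^ K)⁻¹) ^ n := by rw [mul_one, hM']
      _ ≤ x ^ n * C := mul_le_mul_of_nonneg_left (pow_le_pow_right₀ hinv1 hn8) (by positivity)
      _ = C * x ^ n := mul_comm _ _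
  have hbnn : ∀ p : ℕ × ℕ, 0 ≤ (if p.2 ≤ p.1 then M ^ p.1 * r ^ (p.1 * p.1 / 8) else 0) := by
    intro p; split <;> positivity
  rw [summable_prod_of_nonneg hbnn]
  constructor
  · intro n
    apply summable_of_ne_finset_zero (s := Finset.range (n + 1))
    intro j hj
    simp only [Finset.mem_range, not_lt] at hj
    rw [if_neg (by omega)]
  · have hxnorm : ‖x‖ < 1 := by rwa [Real.norm_eq_abs, abs_of_nonneg hx0]
    have hsum1 : Summable (fun n : ℕ => ((n : ℝ) + 1) * x ^ n) := by
      have h1 := summable_pow_mul_geometric_of_norm_lt_one (R := ℝ) 1 hxnorm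
      have h2 : Summable (fun n : ℕ => x ^ n) := summable_geometric_of_lt_one hx0 hK
      exact (h1.add h2).congr fun n => by ring
    have hsum : Summable (fun n : ℕ => C * (((n : ℝ) + 1) * x ^ n)) := hsum1.mul_left C
    apply Summable.of_nonneg_of_le (fun n => tsum_nonneg fun j => hbnn (n, j)) ?_ hsum
    intro n
    have hts : ∑' j : ℕ, (if j ≤ n then M ^ n * r ^ (n * n / 8) else 0)
        = ((n : ℝ) + 1) * (M ^ n * r ^ (n * n / 8)) := by
      rw [tsum_eq_sum (s := Finset.range (n + 1)) ?_]
      · rw [Finset.sum_congr rfl (fun j hj => if_pos (by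
          simp only [Finset.mem_range] at hj; omega)), Finset.sum_const, Finset.card_range,
          nsmul_eq_mul]
        push_cast
        ring
      · intro j hj
        simp only [Finset.mem_range, not_lt] at hj
        exact if_neg (by omega)
    calc (∑' j : ℕ, if (n, j).2 ≤ (n, j).1 then M ^ (n, j).1 * r ^ ((n, j).1 * (n, j).1 / 8) else 0)
        = ((n : ℝ) + 1) * (M ^ n * r ^ (n * n / 8)) := hts
    _ ≤ ((n : ℝ) + 1) * (C * x ^ n) := mul_le_mul_of_nonneg_left (key n) (by positivity)
    _ = C * (((n : ℝ) + 1) * x ^ n) := by ring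

lemma summable_bound (q z : ℂ) (hq0 : q ≠ 0) (hq1 : ‖q‖ < 1) : Summable (bound q z) := by
  have h0 : 0 < ‖q‖ := norm_pos_iff.mpr hq0
  exact summable_aux h0 hq1 (le_max_left _ _)

lemma summable_fA (q z : ℂ) (hq0 : q ≠ 0) (hq1 : ‖q‖ < 1) : Summable (fA q z) :=
  Summable.of_norm <| Summable.of_nonneg_of_le (fun p => norm_nonneg _)
    (norm_fA_le q z hq1.le) (summable_bound q z hq0 hq1)

lemma summable_fB (q z : ℂ) (hq0 : q ≠ 0) (hq1 : ‖q‖ < 1) : Summable (fB q z) :=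
  Summable.of_norm <| Summable.of_nonneg_of_le (fun p => norm_nonneg _)
    (norm_fB_le q z hq1.le) (summable_bound q z hq0 hq1)

end GarvanAux

open GarvanAux in
/-- Garvan's symmetry identity (Eq. (2.14) of Garvan 2014) relating
the two wedges of the indefinite quadratic form `n² - 3j²`. -/
theorem garvan_wedge_symmetry (q z : ℂ) (hq : ‖q‖ < 1) (hz : z ≠ 0) :
    (∑' n : ℕ, ∑ j ∈ (Finset.range n).filter (fun j => 3 * j < n),
        (-1 : ℂ) ^ (n + j) * z ^ ((n : ℤ) - 3 * (j : ℤ)) *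
          q ^ (((n : ℤ) ^ 2 - 3 * (j : ℤ) ^ 2 + (n : ℤ) - (j : ℤ)) / 2)) =
      ∑' n : ℕ, ∑ j ∈ (Finset.range (n / 2 + 1)).filter (fun j => n < 3 * j),
        (-1 : ℂ) ^ (n + j) * z ^ (3 * (j : ℤ) - (n : ℤ)) *
          q ^ (((n : ℤ) ^ 2 - 3 * (j : ℤ) ^ 2 + (n : ℤ) - (j : ℤ)) / 2) := by
  by_cases hq0 : q = 0
  · subst hq0
    have L0 : ∀ n : ℕ, (∑ j ∈ (Finset.range n).filter (fun j => 3 * j < n),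
        (-1 : ℂ) ^ (n + j) * z ^ ((n : ℤ) - 3 * (j : ℤ)) *
          (0 : ℂ) ^ (((n : ℤ) ^ 2 - 3 * (j : ℤ) ^ 2 + (n : ℤ) - (j : ℤ)) / 2)) = 0 := by
      intro n
      apply Finset.sum_eq_zero
      intro j hj
      simp only [Finset.mem_filter, Finset.mem_range] at hj
      rw [e_cast (show 2 * j ≤ n by omega), zero_zpow _ (by
        exact_mod_cast (e_pos (by omega) (by omega)).ne'), mul_zero]
    have R0 : ∀ n : ℕ, (∑ j ∈ (Finset.range (n / 2 + 1)).filter (fun j => n < 3 * j),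
        (-1 : ℂ) ^ (n + j) * z ^ (3 * (j : ℤ) - (n : ℤ)) *
          (0 : ℂ) ^ (((n : ℤ) ^ 2 - 3 * (j : ℤ) ^ 2 + (n : ℤ) - (j : ℤ)) / 2)) = 0 := by
      intro n
      apply Finset.sum_eq_zero
      intro j hj
      simp only [Finset.mem_filter, Finset.mem_range] at hj
      rw [e_cast (show 2 * j ≤ n by omega), zero_zpow _ (by
        exact_mod_cast (e_pos (by omega) (by omega)).ne'), mul_zero]
    rw [tsum_congr L0, tsum_congr R0]
  · have hq1 : ‖q‖ < 1 := hq
    have hSA : Summable (fA q z) := summable_fA q z hq0 hq1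
    have hSB : Summable (fB q z) := summable_fB q z hq0 hq1
    calc (∑' n : ℕ, ∑ j ∈ (Finset.range n).filter (fun j => 3 * j < n),
        (-1 : ℂ) ^ (n + j) * z ^ ((n : ℤ) - 3 * (j : ℤ)) *
          q ^ (((n : ℤ) ^ 2 - 3 * (j : ℤ) ^ 2 + (n : ℤ) - (j : ℤ)) / 2))
        = ∑' n : ℕ, ∑' j : ℕ, fA q z (n, j) := tsum_congr fun n => (sliceA q z n).symm
    _ = ∑' p : ℕ × ℕ, fA q z p := (Summable.tsum_prod' hSA hSA.prod_factor).symm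
    _ = ∑' p : ℕ × ℕ, fB q z p := tsum_fA_eq_fB q z
    _ = ∑' n : ℕ, ∑' j : ℕ, fB q z (n, j) := Summable.tsum_prod' hSB hSB.prod_factor
    _ = ∑' n : ℕ, ∑ j ∈ (Finset.range (n / 2 + 1)).filter (fun j => n < 3 * j),
        (-1 : ℂ) ^ (n + j) * z ^ (3 * (j : ℤ) - (n : ℤ)) *
          q ^ (((n : ℤ) ^ 2 - 3 * (j : ℤ) ^ 2 + (n : ℤ) - (j : ℤ)) / 2) :=
        tsum_congr fun n => sliceB q z n
end
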